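/- arXiv:1704.05139 — 6 statements merged into one kernel-verified Lean document; each statement's English description precedes it below -/
import Mathlib

section
/- Fix j with 1 ≤ j ≤ m. Then the function z ↦ φ″(z)/φ(z) − r_j(r_j+1)/(z−y_j)² − H_j/(z−y_j), defined on a punctured neighbourhood of y_j, extends to a function analytic on a full neighbourhood of y_j, where H_j = −2 r_j ( ∑_{k=1}^n 1/(y_j−x_k) + ∑_{i=1, i≠j}^m r_i/(y_i−y_j) ). That is, the potential u = φ″/φ has a double pole at y_j with quadratic residue r_j(r_j+1) and first-order coefficient (accessory parameter) H_j. -/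
open Filter Topology Finset

set_option maxHeartbeats 1000000 in
lemma key_alg (a b e u v t : ℂ) (s : ℕ) (ht : t ≠ 0) (hu : u ≠ 0) (hv : v ≠ 0) :
    a / u - 2 * (s : ℂ) * ((b / u - e / v) / t) =
      (a * (t ^ s)⁻¹ - 2 * (s : ℂ) * (b * (t ^ (s + 1))⁻¹)
          + (s : ℂ) * ((s : ℂ) + 1) * (u * (t ^ (s + 2))⁻¹)) / (u / t ^ s)
        - (s : ℂ) * ((s : ℂ) + 1) / t ^ 2 - (-2 * (s : ℂ) * (e / v)) / t := by
  have hT : t ^ s ≠ 0 := pow_ne_zero _ ht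
  have e1 : t ^ (s + 1) = t ^ s * t := pow_succ t s
  have e2 : t ^ (s + 2) = t ^ s * t * t := by rw [pow_succ, pow_succ]
  rw [e1, e2, div_div_eq_mul_div]
  generalize hg : t ^ s = T at hT ⊢
  have h1 : (a * T⁻¹ - 2 * (s : ℂ) * (b * (T * t)⁻¹)
      + (s : ℂ) * ((s : ℂ) + 1) * (u * (T * t * t)⁻¹)) * T
      = a - 2 * (s : ℂ) * b / t + (s : ℂ) * ((s : ℂ) + 1) * u / t ^ 2 := by
    field_simp
  rw [h1]
  field_simp
  have hD : t * t ^ 2 * u * t ^ 2 ≠ 0 := by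
    exact mul_ne_zero (mul_ne_zero (mul_ne_zero ht (pow_ne_zero _ ht)) hu) (pow_ne_zero _ ht)
  ring

set_option maxHeartbeats 1000000 in
/-- For `φ(z) = ∏ⱼ(z-xⱼ)/∏ᵢ(z-yᵢ)^{rᵢ}`, the potential `u = φ''/φ` has a double pole at
`y_j` with quadratic residue `rⱼ(rⱼ+1)` and first-order coefficient the accessory
parameter `H_j = -2rⱼ(∑ₖ 1/(yⱼ-xₖ) + ∑_{i≠j} rᵢ/(yᵢ-yⱼ))`: subtracting this singular
part yields a function extending analytically across `y_j`. -/
theorem stmt_5 (n m : ℕ) (hn : 0 < n) (hm : 0 < m)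
    (x : Fin n → ℂ) (y : Fin m → ℂ) (r : Fin m → ℕ) (hr : ∀ i, 0 < r i)
    (hx : Function.Injective x) (hy : Function.Injective y)
    (hxy : ∀ j i, x j ≠ y i)
    (φ : ℂ → ℂ)
    (hφ : φ = fun z => (∏ j, (z - x j)) / ∏ i, (z - y i) ^ r i)
    (j : Fin m) :
    ∃ g : ℂ → ℂ, AnalyticAt ℂ g (y j) ∧
      ∀ᶠ z in 𝓝[≠] (y j),
        g z = iteratedDeriv 2 φ z / φ z
          - (r j : ℂ) * ((r j : ℂ) + 1) / (z - y j) ^ 2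
          - (-2 * (r j : ℂ) * ((∑ k, 1 / (y j - x k))
              + ∑ i ∈ Finset.univ.erase j, (r i : ℂ) / (y i - y j))) / (z - y j) := by
  classical
  set c : ℂ := y j with hc
  set s : ℕ := r j with hs
  set P : ℂ → ℂ := fun z => ∏ k, (z - x k) with hPdef
  set Q : ℂ → ℂ := fun z => ∏ i ∈ Finset.univ.erase j, (z - y i) ^ r i with hQdef
  set ψ : ℂ → ℂ := fun z => P z / Q z with hψdef
  set V : Set ℂ := (((Finset.univ.erase j).image y : Finset ℂ) : Set ℂ)ᶜ with hVdef
  -- basic facts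
  have hVopen : IsOpen V := (Set.Finite.isClosed (Finset.finite_toSet _)).isOpen_compl
  have hQne : ∀ z ∈ V, Q z ≠ 0 := by
    intro z hz
    apply Finset.prod_ne_zero_iff.mpr
    intro i hi
    apply pow_ne_zero
    rw [sub_ne_zero]
    intro h
    apply hz
    simp only [Finset.coe_image, Set.mem_image, Finset.mem_coe]
    exact ⟨i, hi, h.symm⟩
  have hcV : c ∈ V := by
    intro h
    simp only [Finset.coe_image, Set.mem_image, Finset.mem_coe] at h
    obtain ⟨i, hi, hyi⟩ := h
    exact (Finset.ne_of_mem_erase hi) (hy hyi)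
  have hPan : ∀ z : ℂ, AnalyticAt ℂ P z := fun z =>
    Finset.analyticAt_fun_prod _ (fun k _ => (analyticAt_id.sub analyticAt_const))
  have hQan : ∀ z : ℂ, AnalyticAt ℂ Q z := fun z =>
    Finset.analyticAt_fun_prod _ (fun i _ => (analyticAt_id.sub analyticAt_const).pow _)
  have hψV : AnalyticOnNhd ℂ ψ V := fun z hz => (hPan z).div (hQan z) (hQne z hz)
  have hPc : P c ≠ 0 := by
    apply Finset.prod_ne_zero_iff.mpr
    intro k _
    rw [sub_ne_zero]
    exact fun h => (hxy k j) (h.symm)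
  have hψc : ψ c ≠ 0 := div_ne_zero hPc (hQne c hcV)
  have hψcont : ContinuousAt ψ c := (hψV c hcV).continuousAt
  -- the global identity φ w = ψ w / (w - c) ^ s
  have hφeq : ∀ w : ℂ, φ w = ψ w / (w - c) ^ s := by
    intro w
    rw [hφ, hψdef, hPdef, hQdef]
    simp only
    rw [div_div, Finset.prod_erase_mul Finset.univ _ (Finset.mem_univ j)]
  have hφfun : φ = fun w => ψ w * ((w - c) ^ s)⁻¹ := by
    funext w; rw [hφeq w, div_eq_mul_inv]
  -- derivative of w ↦ ((w - c)^k)⁻¹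
  have hw : ∀ (k : ℕ) {z : ℂ}, z ≠ c →
      HasDerivAt (fun w : ℂ => ((w - c) ^ k)⁻¹) (-(k : ℂ) * ((z - c) ^ (k + 1))⁻¹) z := by
    intro k z hz
    have ht : z - c ≠ 0 := sub_ne_zero.mpr hz
    have h1 : HasDerivAt (fun w : ℂ => w - c) 1 z := (hasDerivAt_id z).sub_const c
    have h2 := (hasDerivAt_zpow (-(k : ℤ)) (z - c) (Or.inl ht)).comp z h1
    have e1 : (fun w : ℂ => (w - c) ^ (-(k : ℤ))) = fun w : ℂ => ((w - c) ^ k)⁻¹ := by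
      funext w; rw [zpow_neg, zpow_natCast]
    have e2 : (((-(k : ℤ) : ℤ)) : ℂ) * (z - c) ^ (-(k : ℤ) - 1) * 1
        = -(k : ℂ) * ((z - c) ^ (k + 1))⁻¹ := by
      have h3 : (-(k : ℤ) - 1) = -((k + 1 : ℕ) : ℤ) := by push_cast; ring
      rw [mul_one, h3, zpow_neg, zpow_natCast]
      push_cast
      ring
    have h2'' : HasDerivAt (fun w : ℂ => ((w - c) ^ k)⁻¹)
        (((-(k : ℤ) : ℤ) : ℂ) * (z - c) ^ (-(k : ℤ) - 1) * 1) z := by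
      rw [← e1]; exact h2
    rw [e2] at h2''
    exact h2''
  -- first and second derivative of φ on V \ {c}
  set φ₁ : ℂ → ℂ := fun z =>
    deriv ψ z * ((z - c) ^ s)⁻¹ - (s : ℂ) * (ψ z * ((z - c) ^ (s + 1))⁻¹) with hφ₁def
  set φ₂ : ℂ → ℂ := fun z =>
    deriv (deriv ψ) z * ((z - c) ^ s)⁻¹ - 2 * (s : ℂ) * (deriv ψ z * ((z - c) ^ (s + 1))⁻¹)
      + (s : ℂ) * ((s : ℂ) + 1) * (ψ z * ((z - c) ^ (s + 2))⁻¹) with hφ₂def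
  have hd1 : ∀ z ∈ V, z ≠ c → HasDerivAt φ (φ₁ z) z := by
    intro z hzV hzc
    rw [hφfun]
    have := ((hψV z hzV).differentiableAt.hasDerivAt).fun_mul (hw s hzc)
    refine this.congr_deriv ?_
    rw [hφ₁def]; ring
  have hd2 : ∀ z ∈ V, z ≠ c → HasDerivAt φ₁ (φ₂ z) z := by
    intro z hzV hzc
    have hA := ((hψV.deriv z hzV).differentiableAt.hasDerivAt).fun_mul (hw s hzc)
    have hB := ((((hψV z hzV).differentiableAt.hasDerivAt).fun_mul (hw (s + 1) hzc))).const_mul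
      (s : ℂ)
    have := hA.fun_sub hB
    refine this.congr_deriv ?_
    rw [hφ₂def]
    have h21 : s + 1 + 1 = s + 2 := rfl
    rw [h21]
    push_cast
    ring
  -- the second iterated derivative on V \ {c}
  have hiter : ∀ z ∈ V, z ≠ c → iteratedDeriv 2 φ z = φ₂ z := by
    intro z hzV hzc
    have hUopen : IsOpen (V ∩ {c}ᶜ) := hVopen.inter isOpen_compl_singleton
    have hzU : z ∈ V ∩ {c}ᶜ := ⟨hzV, hzc⟩
    have hev : ∀ᶠ w in 𝓝 z, w ∈ V ∩ {c}ᶜ := hUopen.eventually_mem hzU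
    have h1 : deriv φ =ᶠ[𝓝 z] φ₁ := hev.mono fun w hw => (hd1 w hw.1 hw.2).deriv
    rw [iteratedDeriv_succ, iteratedDeriv_one, h1.deriv_eq]
    exact (hd2 z hzV hzc).deriv
  -- the value of the logarithmic derivative of ψ at c
  have hPdiff : DifferentiableAt ℂ P c := (hPan c).differentiableAt
  have hQdiff : DifferentiableAt ℂ Q c := (hQan c).differentiableAt
  have hL : deriv ψ c / ψ c
      = (∑ k, 1 / (c - x k)) + ∑ i ∈ Finset.univ.erase j, (r i : ℂ) / (y i - c) := by
    have h0 : deriv ψ c / ψ c = logDeriv ψ c := rfl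
    rw [h0, hψdef, logDeriv_div c hPc (hQne c hcV) hPdiff hQdiff]
    have hP' : logDeriv P c = ∑ k, 1 / (c - x k) := by
      rw [hPdef, logDeriv_prod (s := Finset.univ) (f := fun k => fun z => z - x k) (x := c)
        (fun k _ => sub_ne_zero.mpr fun h => (hxy k j) h.symm)
        (fun k _ => (differentiableAt_id.sub (differentiableAt_const _)))]
      refine Finset.sum_congr rfl fun k _ => ?_
      rw [logDeriv_apply]
      simp [deriv_sub_const]
    have hQ' : logDeriv Q c = ∑ i ∈ Finset.univ.erase j, (r i : ℂ) / (c - y i) := by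
      rw [hQdef, logDeriv_prod (s := Finset.univ.erase j) (f := fun i => fun z => (z - y i) ^ r i) (x := c)
        (fun i hi => pow_ne_zero _ (sub_ne_zero.mpr
          fun h => (Finset.ne_of_mem_erase hi) (hy h).symm))
        (fun i _ => ((differentiableAt_id.sub (differentiableAt_const _)).pow _))]
      refine Finset.sum_congr rfl fun i hi => ?_
      rw [logDeriv_fun_pow (differentiableAt_id.sub (differentiableAt_const _)) (r i)]
      rw [logDeriv_apply]
      simp [deriv_sub_const, div_eq_mul_inv]
    rw [hP', hQ']
    rw [sub_eq_add_neg, ← Finset.sum_neg_distrib]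
    congr 1
    refine Finset.sum_congr rfl fun i hi => ?_
    have hne : y i - c = -(c - y i) := by ring
    rw [hne, div_neg]
  -- the analytic extension
  refine ⟨fun z => deriv (deriv ψ) z / ψ z
      - 2 * (s : ℂ) * dslope (fun w => deriv ψ w / ψ w) c z, ?_, ?_⟩
  · have h1 : AnalyticAt ℂ (deriv (deriv ψ)) c := (hψV.deriv.deriv c hcV)
    have h2 : AnalyticAt ℂ ψ c := hψV c hcV
    have hH : AnalyticAt ℂ (fun w => deriv ψ w / ψ w) c :=
      (hψV.deriv c hcV).div h2 hψc
    obtain ⟨p, hp⟩ := hH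
    have hds : AnalyticAt ℂ (dslope (fun w => deriv ψ w / ψ w) c) c :=
      ⟨_, hp.has_fpower_series_dslope_fslope⟩
    exact (h1.div h2 hψc).sub (analyticAt_const.mul hds)
  · have ev1 : ∀ᶠ z in 𝓝[≠] c, z ∈ V :=
      eventually_nhdsWithin_of_eventually_nhds (hVopen.eventually_mem hcV)
    have ev2 : ∀ᶠ z in 𝓝[≠] c, ψ z ≠ 0 :=
      eventually_nhdsWithin_of_eventually_nhds (hψcont.eventually_ne hψc)
    filter_upwards [ev1, ev2, eventually_mem_nhdsWithin] with z hzV hψz hzc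
    have hzc' : z ≠ c := hzc
    have ht : z - c ≠ 0 := sub_ne_zero.mpr hzc'
    rw [hiter z hzV hzc', hφeq z, ← hL, dslope_of_ne _ hzc', slope_def_field, hφ₂def]
    exact key_alg (deriv (deriv ψ) z) (deriv ψ z) (deriv ψ c) (ψ z) (ψ c) (z - c) s ht hψz hψc
end

section
/- Assume n = 1 + ∑_{i=1}^m r_i and that the Stieltjes–Bethe equations hold at every index k = 1,…,n−1. Then for every z ∈ ℂ with z ∉ {x₁,…,xₙ} ∪ {y₁,…,y_m}, φ″(z)/φ(z) = ∑_{i=1}^m [ r_i(r_i+1)/(z−y_i)² + H_i/(z−y_i) ], where H_i = −2 r_i ( ∑_{k=1}^n 1/(y_i−x_k) + ∑_{l=1, l≠i}^m r_l/(y_l−y_i) ). In particular the potential u = φ″/φ is non-singular at every x_k, has only the double poles y_i with quadratic residues r_i(r_i+1) and residues H_i, and has no constant term. -/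
open Filter Topology Finset

section StieltjesBetheAux

open Polynomial



variable {ι : Type*} [DecidableEq ι]


private lemma sum_erase_eq_sum_ite (s : Finset ι) (G : ι → ι → ℂ) (p : ι) :
    ∑ q ∈ s.erase p, G p q = ∑ q ∈ s, if q = p then 0 else G p q := by
  rw [← Finset.sum_erase (a := p) s (f := fun q => if q = p then 0 else G p q) (by simp)]
  exact Finset.sum_congr rfl fun q hq => by simp [Finset.ne_of_mem_erase hq]

private lemma sum_erase_swap (s : Finset ι) (F : ι → ι → ℂ) :
    ∑ p ∈ s, ∑ q ∈ s.erase p, F p q = ∑ p ∈ s, ∑ q ∈ s.erase p, F q p := by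
  have h : ∀ G : ι → ι → ℂ, ∑ p ∈ s, ∑ q ∈ s.erase p, G p q
      = ∑ p ∈ s, ∑ q ∈ s, if q = p then 0 else G p q :=
    fun G => Finset.sum_congr rfl fun p _ => sum_erase_eq_sum_ite s G p
  rw [h, h (fun p q => F q p), Finset.sum_comm]
  refine Finset.sum_congr rfl fun p _ => Finset.sum_congr rfl fun q _ => ?_
  exact if_congr eq_comm rfl rfl

private lemma sum_erase_antisym (s : Finset ι) (F : ι → ι → ℂ)
    (hF : ∀ p q, F q p = -F p q) :
    ∑ p ∈ s, ∑ q ∈ s.erase p, F p q = 0 := by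
  have h := sum_erase_swap s F
  have h2 : ∑ p ∈ s, ∑ q ∈ s.erase p, F q p
      = -∑ p ∈ s, ∑ q ∈ s.erase p, F p q := by
    rw [← Finset.sum_neg_distrib]
    exact Finset.sum_congr rfl fun p _ => by
      rw [← Finset.sum_neg_distrib]
      exact Finset.sum_congr rfl fun q _ => hF p q
  have h3 := h.trans h2
  have h4 : (2:ℂ) * ∑ p ∈ s, ∑ q ∈ s.erase p, F p q = 0 := by linear_combination h3
  exact (mul_eq_zero.mp h4).resolve_left two_ne_zero

private lemma pair_frac {z a b : ℂ} (hza : z ≠ a) (hzb : z ≠ b) (hab : a ≠ b) :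
    (z - a)⁻¹ * (z - b)⁻¹ = (a - b)⁻¹ * ((z - a)⁻¹ - (z - b)⁻¹) := by
  have h1 : z - a ≠ 0 := sub_ne_zero.2 hza
  have h2 : z - b ≠ 0 := sub_ne_zero.2 hzb
  have h3 : a - b ≠ 0 := sub_ne_zero.2 hab
  field_simp
  ring

private lemma derivative_finset_prod' (s : Finset ι) (f : ι → ℂ[X]) :
    derivative (∏ i ∈ s, f i) = ∑ i ∈ s, (∏ j ∈ s.erase i, f j) * derivative (f i) := by
  classical
  induction s using Finset.induction_on with
  | empty => simp
  | insert a s ha ih =>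
    rw [Finset.prod_insert ha, derivative_mul, ih, Finset.sum_insert ha,
      Finset.erase_insert ha, Finset.mul_sum]
    have : ∑ i ∈ s, (∏ j ∈ (insert a s).erase i, f j) * derivative (f i)
        = ∑ i ∈ s, f a * ((∏ j ∈ s.erase i, f j) * derivative (f i)) := by
      refine Finset.sum_congr rfl fun i hi => ?_
      rw [Finset.erase_insert_of_ne (by rintro rfl; exact ha hi)]
      rw [Finset.prod_insert (by simp [ha])]
      ring
    rw [this]
    ring

private lemma prod_erase_erase {n : ℕ} (x : Fin n → ℂ) (hx : Function.Injective x)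
    (k l : Fin n) (hlk : l ≠ k) :
    ∏ i ∈ (Finset.univ.erase k).erase l, (x k - x i)
      = (∏ j ∈ Finset.univ.erase k, (x k - x j)) * (x k - x l)⁻¹ := by
  have hl : l ∈ Finset.univ.erase k := Finset.mem_erase.2 ⟨hlk, Finset.mem_univ l⟩
  have h0 : x k - x l ≠ 0 := sub_ne_zero.2 fun h => hlk (hx h).symm
  rw [← Finset.mul_prod_erase _ _ hl]
  field_simp

private lemma bethe_rel {n m : ℕ} (x : Fin n → ℂ) (y : Fin m → ℂ) (r : Fin m → ℕ)
    (hr : ∀ i, 0 < r i) (hx : Function.Injective x) (hxy : ∀ j i, x j ≠ y i)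
    (hnr : n = 1 + ∑ i, r i) (k : Fin n) :
    (fun k => (∏ i, (x k - y i) ^ r i) * (∏ j ∈ Finset.univ.erase k, (x k - x j))⁻¹) k
      * ((∑ i, (r i : ℂ) * (x k - y i)⁻¹) - ∑ j ∈ Finset.univ.erase k, (x k - x j)⁻¹)
    = ∑ j ∈ Finset.univ.erase k,
        (fun k => (∏ i, (x k - y i) ^ r i) * (∏ j ∈ Finset.univ.erase k, (x k - x j))⁻¹) j
          * (x k - x j)⁻¹ := by
  classical
  set c : Fin n → ℂ :=
    fun k => (∏ i, (x k - y i) ^ r i) * (∏ j ∈ Finset.univ.erase k, (x k - x j))⁻¹ with hc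
  set q : ℂ[X] := ∏ i, (X - C (y i)) ^ r i with hq
  have hqev : ∀ t : ℂ, q.eval t = ∏ i, (t - y i) ^ r i := by
    intro t; simp [hq, Polynomial.eval_prod]
  have hπ : ∀ k : Fin n, (∏ j ∈ Finset.univ.erase k, (x k - x j)) ≠ 0 := by
    intro k
    refine Finset.prod_ne_zero_iff.2 fun j hj => sub_ne_zero.2 fun h => ?_
    exact (Finset.mem_erase.1 hj).1 (hx h.symm)
  have hxyk : ∀ (k : Fin n) (i : Fin m), x k - y i ≠ 0 :=
    fun k i => sub_ne_zero.2 (hxy k i)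
  have hd : ∀ k : Fin n, (∏ i, (x k - y i) ^ r i) ≠ 0 := by
    intro k
    exact Finset.prod_ne_zero_iff.2 fun i _ => pow_ne_zero _ (hxyk k i)
  -- degree of q
  have hqn : ∀ i : Fin m, ((X : ℂ[X]) - C (y i)) ^ r i ≠ 0 :=
    fun i => pow_ne_zero _ (Polynomial.X_sub_C_ne_zero _)
  have hq0 : q ≠ 0 := Finset.prod_ne_zero_iff.2 fun i _ => hqn i
  have hqdeg : q.natDegree = ∑ i, r i := by
    rw [hq, Polynomial.natDegree_prod _ _ fun i _ => hqn i]
    refine Finset.sum_congr rfl fun i _ => ?_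
    rw [Polynomial.natDegree_pow, Polynomial.natDegree_X_sub_C, mul_one]
  have hq1 : q.natDegree = n - 1 := by rw [hqdeg]; omega
  have hdeglt : q.degree < (Finset.univ : Finset (Fin n)).card := by
    rw [Polynomial.degree_eq_natDegree hq0, hq1, Finset.card_univ, Fintype.card_fin]
    exact_mod_cast (by omega : n - 1 < n)
  -- Lagrange
  have hlag : q = ∑ j : Fin n, C (c j) * ∏ i ∈ Finset.univ.erase j, (X - C (x i)) := by
    have h := Lagrange.eq_interpolate (f := q) (v := x) (Function.Injective.injOn hx) hdeglt
    rw [Lagrange.interpolate_apply] at h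
    rw [h]
    refine Finset.sum_congr rfl fun j _ => ?_
    rw [Lagrange.basis]
    have : ∏ i ∈ Finset.univ.erase j, Lagrange.basisDivisor (x j) (x i)
        = C ((∏ i ∈ Finset.univ.erase j, (x j - x i))⁻¹)
          * ∏ i ∈ Finset.univ.erase j, (X - C (x i)) := by
      rw [← Finset.prod_inv_distrib, map_prod, ← Finset.prod_mul_distrib]
      rfl
    rw [this, hqev, hc, ← mul_assoc, ← map_mul]
  -- derivative of q evaluated at x k
  have hBstep : Polynomial.eval (x k) (Polynomial.derivative q)
      = (∏ i, (x k - y i) ^ r i) * ∑ i, (r i : ℂ) * (x k - y i)⁻¹ := by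
    rw [hq, derivative_finset_prod']
    rw [Polynomial.eval_finset_sum, Finset.mul_sum]
    refine Finset.sum_congr rfl fun i _ => ?_
    rw [Polynomial.derivative_pow, Polynomial.derivative_X_sub_C]
    simp only [Polynomial.eval_mul, Polynomial.eval_one, Polynomial.eval_pow,
      Polynomial.eval_sub, Polynomial.eval_X, Polynomial.eval_C, Polynomial.eval_natCast,
      Polynomial.eval_prod, mul_one]
    have h1 : (x k - y i) ^ (r i - 1) = (x k - y i) ^ r i * (x k - y i)⁻¹ := by
      have hri := hr i
      field_simp [hxyk k i]
      rw [← pow_succ']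
      congr 1
      omega
    rw [h1]
    rw [← Finset.mul_prod_erase _ (fun i => (x k - y i) ^ r i) (Finset.mem_univ i)]
    ring
  -- derivative of the Lagrange sum evaluated at x k
  have hDk : Polynomial.eval (x k)
      (Polynomial.derivative (∏ i ∈ Finset.univ.erase k, (X - C (x i))))
      = (∏ j ∈ Finset.univ.erase k, (x k - x j))
        * ∑ j ∈ Finset.univ.erase k, (x k - x j)⁻¹ := by
    rw [derivative_finset_prod']
    rw [Polynomial.eval_finset_sum, Finset.mul_sum]
    refine Finset.sum_congr rfl fun l hl => ?_
    rw [Polynomial.derivative_X_sub_C, Polynomial.eval_mul, Polynomial.eval_one, mul_one,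
      Polynomial.eval_prod]
    simp only [Polynomial.eval_sub, Polynomial.eval_X, Polynomial.eval_C]
    exact prod_erase_erase x hx k l (Finset.mem_erase.1 hl).1
  have hDj : ∀ j : Fin n, j ≠ k → Polynomial.eval (x k)
      (Polynomial.derivative (∏ i ∈ Finset.univ.erase j, (X - C (x i))))
      = (∏ i ∈ Finset.univ.erase k, (x k - x i)) * (x k - x j)⁻¹ := by
    intro j hjk
    have hk : k ∈ Finset.univ.erase j := Finset.mem_erase.2 ⟨fun h => hjk h.symm, Finset.mem_univ k⟩
    rw [derivative_finset_prod', Polynomial.eval_finset_sum]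
    have hterm : ∀ l ∈ Finset.univ.erase j, Polynomial.eval (x k)
        ((∏ i ∈ (Finset.univ.erase j).erase l, (X - C (x i))) * Polynomial.derivative (X - C (x l)))
        = if l = k then ∏ i ∈ (Finset.univ.erase j).erase k, (x k - x i) else 0 := by
      intro l hl
      rw [Polynomial.derivative_X_sub_C, Polynomial.eval_mul, Polynomial.eval_one, mul_one,
        Polynomial.eval_prod]
      simp only [Polynomial.eval_sub, Polynomial.eval_X, Polynomial.eval_C]
      by_cases hlk : l = k
      · subst hlk; simp
      · rw [if_neg hlk]
        refine Finset.prod_eq_zero (i := k) ?_ (by simp)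
        exact Finset.mem_erase.2 ⟨fun h => hlk h.symm, hk⟩
    rw [Finset.sum_congr rfl hterm, Finset.sum_ite_eq' (Finset.univ.erase j) k _, if_pos hk]
    rw [Finset.erase_right_comm]
    exact prod_erase_erase x hx k j hjk
  -- combine
  have hE0 : Polynomial.eval (x k) (Polynomial.derivative q)
      = ∑ j : Fin n, c j * Polynomial.eval (x k)
          (Polynomial.derivative (∏ i ∈ Finset.univ.erase j, (X - C (x i)))) := by
    conv_lhs => rw [hlag]
    rw [Polynomial.derivative_sum, Polynomial.eval_finset_sum]
    refine Finset.sum_congr rfl fun j _ => ?_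
    rw [Polynomial.derivative_C_mul, Polynomial.eval_mul, Polynomial.eval_C]
  have hE1 : ∑ j : Fin n, c j * Polynomial.eval (x k)
        (Polynomial.derivative (∏ i ∈ Finset.univ.erase j, (X - C (x i))))
      = c k * ((∏ j ∈ Finset.univ.erase k, (x k - x j)) * ∑ j ∈ Finset.univ.erase k, (x k - x j)⁻¹)
        + ∑ j ∈ Finset.univ.erase k,
            c j * ((∏ i ∈ Finset.univ.erase k, (x k - x i)) * (x k - x j)⁻¹) := by
    rw [← Finset.add_sum_erase _ _ (Finset.mem_univ k)]
    congr 1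
    · rw [hDk]
    · exact Finset.sum_congr rfl fun j hj => by rw [hDj j (Finset.mem_erase.1 hj).1]
  have hE : (∏ i, (x k - y i) ^ r i) * ∑ i, (r i : ℂ) * (x k - y i)⁻¹
      = c k * ((∏ j ∈ Finset.univ.erase k, (x k - x j)) * ∑ j ∈ Finset.univ.erase k, (x k - x j)⁻¹)
        + (∏ i ∈ Finset.univ.erase k, (x k - x i))
          * ∑ j ∈ Finset.univ.erase k, c j * (x k - x j)⁻¹ := by
    rw [← hBstep, hE0, hE1]
    congr 1
    rw [Finset.mul_sum]
    refine Finset.sum_congr rfl fun j _ => ?_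
    ring
  have hck : c k * (∏ j ∈ Finset.univ.erase k, (x k - x j)) = ∏ i, (x k - y i) ^ r i := by
    simp only [hc]
    exact inv_mul_cancel_right₀ (hπ k) _
  refine mul_left_cancel₀ (hπ k) ?_
  show (∏ j ∈ Finset.univ.erase k, (x k - x j))
      * (c k * ((∑ i, (r i : ℂ) * (x k - y i)⁻¹) - ∑ j ∈ Finset.univ.erase k, (x k - x j)⁻¹))
    = (∏ j ∈ Finset.univ.erase k, (x k - x j))
      * ∑ j ∈ Finset.univ.erase k, c j * (x k - x j)⁻¹
  calc (∏ j ∈ Finset.univ.erase k, (x k - x j))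
      * (c k * ((∑ i, (r i : ℂ) * (x k - y i)⁻¹) - ∑ j ∈ Finset.univ.erase k, (x k - x j)⁻¹))
      = (c k * (∏ j ∈ Finset.univ.erase k, (x k - x j)))
          * (∑ i, (r i : ℂ) * (x k - y i)⁻¹)
        - c k * ((∏ j ∈ Finset.univ.erase k, (x k - x j))
            * ∑ j ∈ Finset.univ.erase k, (x k - x j)⁻¹) := by ring
    _ = _ := by rw [hck, hE]; ring
private lemma SB_all {n m : ℕ} (hn : 0 < n) (x : Fin n → ℂ) (y : Fin m → ℂ) (r : Fin m → ℕ)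
    (hr : ∀ i, 0 < r i) (hx : Function.Injective x) (hxy : ∀ j i, x j ≠ y i)
    (hnr : n = 1 + ∑ i, r i)
    (hSB : ∀ k : Fin n, (k : ℕ) + 1 < n →
      (∑ i, (r i : ℂ) * (x k - y i)⁻¹) - ∑ j ∈ Finset.univ.erase k, (x k - x j)⁻¹ = 0) :
    ∀ k : Fin n, (∑ i, (r i : ℂ) * (x k - y i)⁻¹)
      - ∑ j ∈ Finset.univ.erase k, (x k - x j)⁻¹ = 0 := by
  classical
  set c : Fin n → ℂ :=
    fun k => (∏ i, (x k - y i) ^ r i) * (∏ j ∈ Finset.univ.erase k, (x k - x j))⁻¹ with hcdef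
  set Sb : Fin n → ℂ := fun k => (∑ i, (r i : ℂ) * (x k - y i)⁻¹)
      - ∑ j ∈ Finset.univ.erase k, (x k - x j)⁻¹ with hSbdef
  have hπ : ∀ k : Fin n, (∏ j ∈ Finset.univ.erase k, (x k - x j)) ≠ 0 := by
    intro k
    refine Finset.prod_ne_zero_iff.2 fun j hj => sub_ne_zero.2 fun h => ?_
    exact (Finset.mem_erase.1 hj).1 (hx h.symm)
  have hcne : ∀ k, c k ≠ 0 := by
    intro k
    refine mul_ne_zero ?_ (inv_ne_zero (hπ k))
    exact Finset.prod_ne_zero_iff.2 fun i _ => pow_ne_zero _ (sub_ne_zero.2 (hxy k i))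
  have hsum : ∑ k : Fin n, c k ^ 2 * Sb k = 0 := by
    have h1 : ∀ k : Fin n, c k ^ 2 * Sb k
        = ∑ j ∈ Finset.univ.erase k, c k * c j * (x k - x j)⁻¹ := by
      intro k
      have := bethe_rel x y r hr hx hxy hnr k
      simp only [hSbdef, hcdef]
      rw [sq, mul_assoc, this, Finset.mul_sum]
      exact Finset.sum_congr rfl fun j _ => by ring
    rw [Finset.sum_congr rfl fun k _ => h1 k]
    refine sum_erase_antisym _ _ fun p q => ?_
    have : (x p - x q)⁻¹ = -(x q - x p)⁻¹ := by rw [← inv_neg, neg_sub]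
    rw [this]; ring
  set lastk : Fin n := ⟨n - 1, by omega⟩ with hlast
  have hother : ∀ k : Fin n, k ≠ lastk → Sb k = 0 := by
    intro k hk
    refine hSB k ?_
    have : (k : ℕ) ≠ n - 1 := fun h => hk (Fin.ext h)
    have := k.isLt
    omega
  have hlastSb : Sb lastk = 0 := by
    have hs : ∑ k : Fin n, c k ^ 2 * Sb k = c lastk ^ 2 * Sb lastk := by
      refine Finset.sum_eq_single_of_mem lastk (Finset.mem_univ _) fun k _ hk => ?_
      rw [hother k hk, mul_zero]
    rw [hs] at hsum
    exact (mul_eq_zero.1 hsum).resolve_left (pow_ne_zero _ (hcne lastk))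
  intro k
  by_cases hk : k = lastk
  · rw [hk]; exact hlastSb
  · exact hother k hk
private lemma sq_sum_frac {ι : Type*} [Fintype ι] [DecidableEq ι] (v : ι → ℂ) (W : ι → ℂ)
    (hv : Function.Injective v) (z : ℂ) (hz : ∀ p, z ≠ v p) :
    (∑ p, W p * (z - v p)⁻¹) ^ 2
      = (∑ p, (W p) ^ 2 * ((z - v p) ^ 2)⁻¹)
        + 2 * ∑ p, W p * (z - v p)⁻¹ * ∑ q ∈ Finset.univ.erase p, W q * (v p - v q)⁻¹ := by
  classical
  rw [sq, Finset.sum_mul_sum]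
  have e1 : ∀ p : ι, ∑ q : ι, (W p * (z - v p)⁻¹) * (W q * (z - v q)⁻¹)
      = (W p) ^ 2 * ((z - v p) ^ 2)⁻¹
        + ∑ q ∈ Finset.univ.erase p, (W p * (z - v p)⁻¹) * (W q * (z - v q)⁻¹) := by
    intro p
    rw [← Finset.add_sum_erase _ _ (Finset.mem_univ p)]
    congr 1
    simp only [pow_two, mul_inv]
    ring
  rw [Finset.sum_congr rfl fun p _ => e1 p, Finset.sum_add_distrib]
  congr 1
  have e2 : ∀ p : ι, ∀ q ∈ Finset.univ.erase p,
      (W p * (z - v p)⁻¹) * (W q * (z - v q)⁻¹)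
      = W p * W q * ((v p - v q)⁻¹ * (z - v p)⁻¹)
        - W p * W q * ((v p - v q)⁻¹ * (z - v q)⁻¹) := by
    intro p q hq
    have hne : v p ≠ v q := fun h => (Finset.mem_erase.1 hq).1 (hv h.symm)
    have := pair_frac (hz p) (hz q) hne
    linear_combination (W p * W q) * this
  rw [Finset.sum_congr rfl fun p _ => Finset.sum_congr rfl (e2 p)]
  rw [Finset.sum_congr rfl fun p _ => Finset.sum_sub_distrib _ _, Finset.sum_sub_distrib]
  have e3 : ∑ p : ι, ∑ q ∈ Finset.univ.erase p, W p * W q * ((v p - v q)⁻¹ * (z - v q)⁻¹)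
      = -∑ p : ι, ∑ q ∈ Finset.univ.erase p, W p * W q * ((v p - v q)⁻¹ * (z - v p)⁻¹) := by
    rw [sum_erase_swap _ (fun p q => W p * W q * ((v p - v q)⁻¹ * (z - v q)⁻¹))]
    rw [← Finset.sum_neg_distrib]
    refine Finset.sum_congr rfl fun p _ => ?_
    rw [← Finset.sum_neg_distrib]
    refine Finset.sum_congr rfl fun q _ => ?_
    have : (v q - v p)⁻¹ = -(v p - v q)⁻¹ := by rw [← inv_neg, neg_sub]
    rw [this]; ring
  rw [e3, sub_neg_eq_add]
  have e4 : ∀ p : ι, W p * (z - v p)⁻¹ * ∑ q ∈ Finset.univ.erase p, W q * (v p - v q)⁻¹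
      = ∑ q ∈ Finset.univ.erase p, W p * W q * ((v p - v q)⁻¹ * (z - v p)⁻¹) := by
    intro p
    rw [Finset.mul_sum]
    exact Finset.sum_congr rfl fun q _ => by ring
  rw [Finset.sum_congr rfl fun p _ => e4 p]
  ring

private lemma cross_sum_frac {ι κ : Type*} [Fintype ι] [Fintype κ] (v : ι → ℂ) (w : κ → ℂ)
    (W : κ → ℂ) (hvw : ∀ p q, v p ≠ w q) (z : ℂ) (hzv : ∀ p, z ≠ v p) (hzw : ∀ q, z ≠ w q) :
    (∑ p, (z - v p)⁻¹) * (∑ q, W q * (z - w q)⁻¹)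
      = (∑ p, (z - v p)⁻¹ * ∑ q, W q * (v p - w q)⁻¹)
        + ∑ q, W q * (z - w q)⁻¹ * ∑ p, (w q - v p)⁻¹ := by
  classical
  rw [Finset.sum_mul_sum]
  have e1 : ∀ (p : ι) (q : κ), (z - v p)⁻¹ * (W q * (z - w q)⁻¹)
      = W q * ((v p - w q)⁻¹ * (z - v p)⁻¹) + W q * ((w q - v p)⁻¹ * (z - w q)⁻¹) := by
    intro p q
    have := pair_frac (hzv p) (hzw q) (hvw p q)
    have h2 : (w q - v p)⁻¹ = -(v p - w q)⁻¹ := by rw [← inv_neg, neg_sub]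
    rw [h2]
    linear_combination W q * this
  rw [Finset.sum_congr rfl fun p _ => Finset.sum_congr rfl fun q _ => e1 p q]
  rw [Finset.sum_congr rfl fun p _ => Finset.sum_add_distrib, Finset.sum_add_distrib]
  congr 1
  · refine Finset.sum_congr rfl fun p _ => ?_
    rw [Finset.mul_sum]
    exact Finset.sum_congr rfl fun q _ => by ring
  · rw [Finset.sum_comm]
    refine Finset.sum_congr rfl fun q _ => ?_
    rw [Finset.mul_sum]
    exact Finset.sum_congr rfl fun p _ => by ring
private lemma potential_algebra {n m : ℕ} (x : Fin n → ℂ) (y : Fin m → ℂ) (r : Fin m → ℕ)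
    (hx : Function.Injective x) (hy : Function.Injective y) (hxy : ∀ j i, x j ≠ y i)
    (hSBall : ∀ k : Fin n, (∑ i, (r i : ℂ) * (x k - y i)⁻¹)
      - ∑ j ∈ Finset.univ.erase k, (x k - x j)⁻¹ = 0)
    (z : ℂ) (hzx : ∀ j, z ≠ x j) (hzy : ∀ i, z ≠ y i) :
    ((∑ j, (z - x j)⁻¹) - ∑ i, (r i : ℂ) * (z - y i)⁻¹) ^ 2
      + ((∑ i, (r i : ℂ) * ((z - y i) ^ 2)⁻¹) - ∑ j, ((z - x j) ^ 2)⁻¹)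
    = ∑ i, ((r i : ℂ) * ((r i : ℂ) + 1) / (z - y i) ^ 2
          + (-2 * (r i : ℂ) * ((∑ k, 1 / (y i - x k))
              + ∑ l ∈ Finset.univ.erase i, (r l : ℂ) / (y l - y i))) / (z - y i)) := by
  classical
  have hX := sq_sum_frac x (fun _ => (1 : ℂ)) hx z hzx
  simp only [one_mul, one_pow] at hX
  have hY := sq_sum_frac y (fun i => (r i : ℂ)) hy z hzy
  have hC := cross_sum_frac x y (fun i => (r i : ℂ)) hxy z hzx hzy
  have hLσ : ∑ p : Fin n, (z - x p)⁻¹ * ∑ i, (r i : ℂ) * (x p - y i)⁻¹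
      = ∑ p : Fin n, (z - x p)⁻¹ * ∑ q ∈ Finset.univ.erase p, (x p - x q)⁻¹ := by
    refine Finset.sum_congr rfl fun p _ => ?_
    rw [sub_eq_zero.1 (hSBall p)]
  have hR : ∀ i : Fin m, (r i : ℂ) * ((r i : ℂ) + 1) / (z - y i) ^ 2
        + (-2 * (r i : ℂ) * ((∑ k, 1 / (y i - x k))
            + ∑ l ∈ Finset.univ.erase i, (r l : ℂ) / (y l - y i))) / (z - y i)
      = ((r i : ℂ) ^ 2 * ((z - y i) ^ 2)⁻¹ + (r i : ℂ) * ((z - y i) ^ 2)⁻¹)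
        - 2 * ((r i : ℂ) * (z - y i)⁻¹ * ∑ k, (y i - x k)⁻¹)
        + 2 * ((r i : ℂ) * (z - y i)⁻¹
            * ∑ l ∈ Finset.univ.erase i, (r l : ℂ) * (y i - y l)⁻¹) := by
    intro i
    have hys : ∑ l ∈ Finset.univ.erase i, (r l : ℂ) / (y l - y i)
        = -∑ l ∈ Finset.univ.erase i, (r l : ℂ) * (y i - y l)⁻¹ := by
      rw [← Finset.sum_neg_distrib]
      refine Finset.sum_congr rfl fun l _ => ?_
      have h2 : (y l - y i)⁻¹ = -(y i - y l)⁻¹ := by rw [← inv_neg, neg_sub]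
      rw [div_eq_mul_inv, h2]
      ring
    have h1 : ∑ k, (1 : ℂ) / (y i - x k) = ∑ k, (y i - x k)⁻¹ := by
      simp [one_div]
    rw [h1, hys, div_eq_mul_inv, div_eq_mul_inv]
    ring
  have hRHS : ∑ i, ((r i : ℂ) * ((r i : ℂ) + 1) / (z - y i) ^ 2
          + (-2 * (r i : ℂ) * ((∑ k, 1 / (y i - x k))
              + ∑ l ∈ Finset.univ.erase i, (r l : ℂ) / (y l - y i))) / (z - y i))
      = ((∑ i, (r i : ℂ) ^ 2 * ((z - y i) ^ 2)⁻¹) + ∑ i, (r i : ℂ) * ((z - y i) ^ 2)⁻¹)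
        - 2 * ∑ i, (r i : ℂ) * (z - y i)⁻¹ * ∑ k, (y i - x k)⁻¹
        + 2 * ∑ i, (r i : ℂ) * (z - y i)⁻¹
            * ∑ l ∈ Finset.univ.erase i, (r l : ℂ) * (y i - y l)⁻¹ := by
    rw [Finset.sum_congr rfl fun i _ => hR i]
    rw [Finset.sum_add_distrib, Finset.sum_sub_distrib, Finset.sum_add_distrib,
      ← Finset.mul_sum, ← Finset.mul_sum]
  rw [hRHS]
  linear_combination hX + hY - 2 * hC - 2 * hLσ
private lemma eval_derivative_prod_pow {m : ℕ} (y : Fin m → ℂ) (r : Fin m → ℕ)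
    (hr : ∀ i, 0 < r i) (t : ℂ) (ht : ∀ i, t ≠ y i) :
    (Polynomial.derivative (∏ i, (X - C (y i)) ^ r i)).eval t
      = (∏ i, (t - y i) ^ r i) * ∑ i, (r i : ℂ) * (t - y i)⁻¹ := by
  classical
  have hty : ∀ i, t - y i ≠ 0 := fun i => sub_ne_zero.2 (ht i)
  rw [derivative_finset_prod']
  rw [Polynomial.eval_finset_sum, Finset.mul_sum]
  refine Finset.sum_congr rfl fun i _ => ?_
  rw [Polynomial.derivative_pow, Polynomial.derivative_X_sub_C]
  simp only [Polynomial.eval_mul, Polynomial.eval_one, Polynomial.eval_pow,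
    Polynomial.eval_sub, Polynomial.eval_X, Polynomial.eval_C, Polynomial.eval_natCast,
    Polynomial.eval_prod, mul_one]
  have h1 : (t - y i) ^ (r i - 1) = (t - y i) ^ r i * (t - y i)⁻¹ := by
    have hri := hr i
    field_simp [hty i]
    rw [← pow_succ']
    congr 1
    omega
  rw [h1]
  rw [← Finset.mul_prod_erase _ (fun i => (t - y i) ^ r i) (Finset.mem_univ i)]
  ring

private lemma phi_second_deriv {n m : ℕ} (x : Fin n → ℂ) (y : Fin m → ℂ) (r : Fin m → ℕ)
    (hr : ∀ i, 0 < r i)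
    (φ : ℂ → ℂ) (hφ : φ = fun z => (∏ j, (z - x j)) / ∏ i, (z - y i) ^ r i)
    (z : ℂ) (hzx : ∀ j, z ≠ x j) (hzy : ∀ i, z ≠ y i) :
    iteratedDeriv 2 φ z / φ z
      = ((∑ j, (z - x j)⁻¹) - ∑ i, (r i : ℂ) * (z - y i)⁻¹) ^ 2
        + ((∑ i, (r i : ℂ) * ((z - y i) ^ 2)⁻¹) - ∑ j, ((z - x j) ^ 2)⁻¹) := by
  classical
  set p : ℂ[X] := ∏ j, (X - C (x j)) ^ (1 : ℕ) with hpdef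
  set q : ℂ[X] := ∏ i, (X - C (y i)) ^ r i with hqdef
  have hpe : ∀ t : ℂ, p.eval t = ∏ j, (t - x j) := by
    intro t; simp [hpdef, Polynomial.eval_prod]
  have hqe : ∀ t : ℂ, q.eval t = ∏ i, (t - y i) ^ r i := by
    intro t; simp [hqdef, Polynomial.eval_prod]
  have hφ' : φ = fun t => p.eval t / q.eval t := by
    funext t; rw [hφ, hpe, hqe]
  set U : Set ℂ := {w | (∀ j, w ≠ x j) ∧ ∀ i, w ≠ y i} with hUdef
  have hUo : IsOpen U := by
    have hU : U = (Set.range x ∪ Set.range y)ᶜ := by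
      ext w
      simp only [hUdef, Set.mem_compl_iff, Set.mem_union, Set.mem_range, not_or, not_exists,
        Set.mem_setOf_eq]
      constructor
      · rintro ⟨h1, h2⟩; exact ⟨fun j h => h1 j h.symm, fun i h => h2 i h.symm⟩
      · rintro ⟨h1, h2⟩; exact ⟨fun j h => h1 j h.symm, fun i h => h2 i h.symm⟩
    rw [hU]
    exact ((Set.finite_range x).union (Set.finite_range y)).isClosed.isOpen_compl
  have hzU : z ∈ U := ⟨hzx, hzy⟩
  have hqne : ∀ w ∈ U, q.eval w ≠ 0 := by
    intro w hw
    rw [hqe]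
    exact Finset.prod_ne_zero_iff.2 fun i _ => pow_ne_zero _ (sub_ne_zero.2 (hw.2 i))
  have hpne : ∀ w ∈ U, p.eval w ≠ 0 := by
    intro w hw
    rw [hpe]
    exact Finset.prod_ne_zero_iff.2 fun j _ => sub_ne_zero.2 (hw.1 j)
  set Λ : ℂ → ℂ := fun w => (∑ j, (w - x j)⁻¹) - ∑ i, (r i : ℂ) * (w - y i)⁻¹ with hΛdef
  -- derivative formula for φ on U
  have hHasD : ∀ w ∈ U, HasDerivAt φ (φ w * Λ w) w := by
    intro w hw
    have hd := (p.hasDerivAt w).div (q.hasDerivAt w) (hqne w hw)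
    have hp' : (Polynomial.derivative p).eval w = p.eval w * ∑ j, (w - x j)⁻¹ := by
      have h0 := eval_derivative_prod_pow x (fun _ => 1) (fun _ => one_pos) w hw.1
      simp only [hpdef]
      simpa [pow_one, Polynomial.eval_prod] using h0
    have hq' : (Polynomial.derivative q).eval w = q.eval w * ∑ i, (r i : ℂ) * (w - y i)⁻¹ :=
      (hqe w) ▸ eval_derivative_prod_pow y r hr w hw.2
    have hval : ((Polynomial.derivative p).eval w * q.eval w
          - p.eval w * (Polynomial.derivative q).eval w) / q.eval w ^ 2
        = φ w * Λ w := by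
      rw [hp', hq', hφ', hΛdef]
      have hq0 := hqne w hw
      field_simp
    rw [← hval]
    rw [hφ']
    exact hd
  -- derivative of Λ at z
  have hSx : HasDerivAt (fun w => ∑ j, (w - x j)⁻¹) (∑ j, -(((z - x j) ^ 2)⁻¹)) z := by
    refine HasDerivAt.fun_sum fun j _ => ?_
    have h1 : HasDerivAt (fun w => w - x j) 1 z := (hasDerivAt_id z).sub_const _
    have h2 := h1.fun_inv (sub_ne_zero.2 (hzx j))
    simpa [neg_div, one_div] using h2
  have hSy : HasDerivAt (fun w => ∑ i, (r i : ℂ) * (w - y i)⁻¹)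
      (∑ i, (r i : ℂ) * -(((z - y i) ^ 2)⁻¹)) z := by
    refine HasDerivAt.fun_sum fun i _ => ?_
    have h1 : HasDerivAt (fun w => w - y i) 1 z := (hasDerivAt_id z).sub_const _
    have h2 := (h1.fun_inv (sub_ne_zero.2 (hzy i))).const_mul ((r i : ℂ))
    simpa [neg_div, one_div, mul_neg] using h2
  have hΛd : HasDerivAt Λ
      ((∑ j, -(((z - x j) ^ 2)⁻¹)) - ∑ i, (r i : ℂ) * -(((z - y i) ^ 2)⁻¹)) z := hSx.sub hSy
  -- second derivative
  have hprod : HasDerivAt (fun w => φ w * Λ w)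
      (φ z * Λ z * Λ z + φ z * ((∑ j, -(((z - x j) ^ 2)⁻¹))
        - ∑ i, (r i : ℂ) * -(((z - y i) ^ 2)⁻¹))) z :=
    (hHasD z hzU).mul hΛd
  have hev : deriv φ =ᶠ[nhds z] fun w => φ w * Λ w := by
    filter_upwards [hUo.mem_nhds hzU] with w hw
    exact (hHasD w hw).deriv
  have h2d : iteratedDeriv 2 φ z
      = φ z * Λ z * Λ z + φ z * ((∑ j, -(((z - x j) ^ 2)⁻¹))
        - ∑ i, (r i : ℂ) * -(((z - y i) ^ 2)⁻¹)) := by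
    rw [show (2 : ℕ) = 1 + 1 from rfl, iteratedDeriv_succ, iteratedDeriv_one]
    rw [hev.deriv_eq]
    exact hprod.deriv
  have hφz : φ z ≠ 0 := by
    rw [hφ']
    exact div_ne_zero (hpne z hzU) (hqne z hzU)
  rw [h2d]
  have e1 : (∑ j, -(((z - x j) ^ 2)⁻¹)) = -∑ j, ((z - x j) ^ 2)⁻¹ :=
    Finset.sum_neg_distrib _
  have e2 : (∑ i, (r i : ℂ) * -(((z - y i) ^ 2)⁻¹)) = -∑ i, (r i : ℂ) * ((z - y i) ^ 2)⁻¹ := by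
    rw [← Finset.sum_neg_distrib]
    exact Finset.sum_congr rfl fun i _ => by ring
  rw [e1, e2]
  field_simp [hΛdef]
  simp only [hΛdef]
  ring

end StieltjesBetheAux

/-- If `n = 1 + ∑ rᵢ` and the Stieltjes–Bethe equations hold at indices `1,…,n-1`, then
`φ''/φ = ∑ᵢ [rᵢ(rᵢ+1)/(z-yᵢ)² + Hᵢ/(z-yᵢ)]` on the complement of the points, where the
`Hᵢ` are the accessory parameters. -/
theorem stmt_7 (n m : ℕ) (hn : 0 < n) (hm : 0 < m)
    (x : Fin n → ℂ) (y : Fin m → ℂ) (r : Fin m → ℕ) (hr : ∀ i, 0 < r i)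
    (hx : Function.Injective x) (hy : Function.Injective y)
    (hxy : ∀ j i, x j ≠ y i)
    (hnr : n = 1 + ∑ i, r i)
    (φ : ℂ → ℂ)
    (hφ : φ = fun z => (∏ j, (z - x j)) / ∏ i, (z - y i) ^ r i)
    (hSB : ∀ k : Fin n, (k : ℕ) + 1 < n →
      ∑ i, (r i : ℂ) / (x k - y i)
        - ∑ j ∈ Finset.univ.erase k, 1 / (x k - x j) = 0) :
    ∀ z : ℂ, (∀ j, z ≠ x j) → (∀ i, z ≠ y i) →
      iteratedDeriv 2 φ z / φ z =
        ∑ i, ((r i : ℂ) * ((r i : ℂ) + 1) / (z - y i) ^ 2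
          + (-2 * (r i : ℂ) * ((∑ k, 1 / (y i - x k))
              + ∑ l ∈ Finset.univ.erase i, (r l : ℂ) / (y l - y i))) / (z - y i)) := by
  intro z hzx hzy
  rw [phi_second_deriv x y r hr φ hφ z hzx hzy]
  have hSB' : ∀ k : Fin n, (k : ℕ) + 1 < n →
      (∑ i, (r i : ℂ) * (x k - y i)⁻¹)
        - ∑ j ∈ Finset.univ.erase k, (x k - x j)⁻¹ = 0 := by
    intro k hk
    have h := hSB k hk
    simpa [div_eq_mul_inv, one_div] using h
  have hall := SB_all hn x y r hr hx hxy hnr hSB'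
  exact potential_algebra x y r hx hy hxy hall z hzx hzy
end

section
/- Assume n = 1 + ∑_{i=1}^m r_i. Then ∑_{k=1}^n φ″(x_k)/φ′(x_k)³ = 0. Equivalently, the sum over k = 1,…,n of the residues of 1/φ² at its double poles x_k vanishes; consequently, if the Stieltjes–Bethe equations hold at the indices k = 1,…,n−1 then they also hold at k = n. -/
open Polynomial Finset

variable {ι : Type*} {F : Type*} [Field F] [DecidableEq ι]

lemma myderiv_prod (s : Finset ι) (f : ι → F[X]) :
    derivative (∏ i ∈ s, f i) = ∑ i ∈ s, (∏ j ∈ s.erase i, f j) * derivative (f i) := by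
  rw [Finset.prod_eq_multiset_prod, Polynomial.derivative_prod, Finset.sum_eq_multiset_sum]
  apply congrArg
  apply Multiset.map_congr rfl
  intro i hi
  rw [← Finset.erase_val, ← Finset.prod_eq_multiset_prod]

lemma eval_deriv_prod_pow (s : Finset ι) (c : ι → F) (r : ι → ℕ) (hr : ∀ i ∈ s, 0 < r i)
    (t : F) (h : ∀ i ∈ s, t - c i ≠ 0) :
    (derivative (∏ i ∈ s, (X - C (c i)) ^ r i)).eval t
      = (∏ i ∈ s, (t - c i) ^ r i) * ∑ i ∈ s, (r i : F) / (t - c i) := by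
  rw [myderiv_prod, eval_finset_sum, Finset.mul_sum]
  apply Finset.sum_congr rfl
  intro i hi
  rw [derivative_pow, derivative_sub, derivative_X, derivative_C, sub_zero]
  simp only [eval_mul, eval_prod, eval_pow, eval_sub, eval_X, eval_C, eval_natCast, mul_one]
  rw [← Finset.mul_prod_erase s (fun i => (t - c i) ^ r i) hi]
  have h1 : (t - c i) ^ r i = (t - c i) ^ (r i - 1) * (t - c i) := by
    rw [← pow_succ]; congr 1; have := hr i hi; omega
  rw [h1]
  field_simp [h i hi]

lemma eval_deriv_prod_lin (s : Finset ι) (c : ι → F) (t : F) (h : ∀ i ∈ s, t - c i ≠ 0) :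
    (derivative (∏ i ∈ s, (X - C (c i)))).eval t
      = (∏ i ∈ s, (t - c i)) * ∑ i ∈ s, 1 / (t - c i) := by
  have := eval_deriv_prod_pow s c (fun _ => 1) (fun _ _ => Nat.one_pos) t h
  simpa using this

lemma core_identity (n m : ℕ) (hn : 0 < n) (x : Fin n → ℂ) (y : Fin m → ℂ)
    (r : Fin m → ℕ) (hr : ∀ i, 0 < r i)
    (hx : Function.Injective x)
    (hxy : ∀ j i, x j ≠ y i)
    (hnr : n = 1 + ∑ i, r i) :
    ∑ k, (∑ i, (r i : ℂ) / (x k - y i) - ∑ j ∈ Finset.univ.erase k, 1 / (x k - x j))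
        * ((∏ i, (x k - y i) ^ r i) ^ 2 / (∏ j ∈ Finset.univ.erase k, (x k - x j)) ^ 2)
      = 0 := by
  classical
  set d := ∑ i, r i with hd
  have hnd : n = d + 1 := by omega
  -- basic nonvanishing
  have hxx : ∀ k : Fin n, ∀ j ∈ Finset.univ.erase k, x k - x j ≠ 0 := by
    intro k j hj
    rw [Finset.mem_erase] at hj
    exact sub_ne_zero.mpr fun h => hj.1 (hx h.symm)
  have hxyne : ∀ (k : Fin n) (i : Fin m), x k - y i ≠ 0 :=
    fun k i => sub_ne_zero.mpr (hxy k i)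
  set Pi : Fin n → ℂ := fun k => ∏ j ∈ Finset.univ.erase k, (x k - x j) with hPi
  set Qv : Fin n → ℂ := fun k => ∏ i, (x k - y i) ^ r i with hQv
  set S : Fin n → ℂ := fun k =>
    ∑ i, (r i : ℂ) / (x k - y i) - ∑ j ∈ Finset.univ.erase k, 1 / (x k - x j) with hS
  have hPine : ∀ k, Pi k ≠ 0 := fun k =>
    Finset.prod_ne_zero_iff.mpr (fun j hj => hxx k j hj)
  have hQvne : ∀ k, Qv k ≠ 0 := fun k =>
    Finset.prod_ne_zero_iff.mpr (fun i _ => pow_ne_zero _ (hxyne k i))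
  set pk : Fin n → ℂ[X] := fun k => ∏ j ∈ Finset.univ.erase k, (X - C (x j)) with hpk
  set q : ℂ[X] := ∏ i, (X - C (y i)) ^ r i with hq
  set a : Fin n → ℂ := fun k => Qv k ^ 2 / Pi k ^ 2 with ha
  set b : Fin n → ℂ := fun k => 2 * S k * Qv k ^ 2 / Pi k ^ 2 with hb
  set N : ℂ[X] := q ^ 2 - ∑ k, (C (a k) + C (b k) * (X - C (x k))) * pk k ^ 2 with hN
  -- evaluation facts
  have hpkeval : ∀ k, (pk k).eval (x k) = Pi k := by
    intro k; simp [hpk, eval_prod]; rfl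
  have hpkzero : ∀ k j : Fin n, j ≠ k → (pk j).eval (x k) = 0 := by
    intro k j hjk
    rw [hpk]
    simp only [eval_prod]
    apply Finset.prod_eq_zero (i := k)
    · simp [Ne.symm hjk]
    · simp
  have hqeval : ∀ k, q.eval (x k) = Qv k := by
    intro k; simp [hq, eval_prod]; rfl
  -- derivative evaluation facts
  have hpk'eval : ∀ k, (derivative (pk k)).eval (x k)
      = Pi k * ∑ j ∈ Finset.univ.erase k, 1 / (x k - x j) := by
    intro k
    exact eval_deriv_prod_lin _ _ _ (hxx k)
  have hq'eval : ∀ k, (derivative q).eval (x k) = Qv k * ∑ i, (r i : ℂ) / (x k - y i) := by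
    intro k
    exact eval_deriv_prod_pow _ _ _ (fun i _ => hr i) _ (fun i _ => hxyne k i)
  -- each (X - x k)^2 divides N
  have hdvd2 : ∀ k, (X - C (x k)) ^ 2 ∣ N := by
    intro k
    have hroot : N.eval (x k) = 0 := by
      rw [hN]
      simp only [eval_sub, eval_pow, eval_finset_sum, eval_mul, eval_add, eval_C, eval_X]
      rw [Finset.sum_eq_single k]
      · rw [hpkeval, hqeval, sub_self, mul_zero, add_zero, ha]
        field_simp [hPine k]
        ring
      · intro j _ hjk
        rw [hpkzero k j hjk]
        ring
      · simp
    obtain ⟨N1, hN1⟩ := dvd_iff_isRoot.mpr hroot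
    have hder : derivative N = N1 + (X - C (x k)) * derivative N1 := by
      rw [hN1, derivative_mul, derivative_X_sub_C, one_mul]
    have hroot' : (derivative N).eval (x k) = 0 := by
      rw [hN, derivative_sub, derivative_pow, derivative_sum]
      simp only [derivative_mul, derivative_pow, derivative_add, derivative_C,
        derivative_X_sub_C, zero_mul, zero_add, mul_one, Nat.reduceSub, pow_one]
      simp only [eval_sub, eval_mul, eval_add, eval_pow, eval_finset_sum, eval_C, eval_X,
        eval_natCast]
      rw [Finset.sum_eq_single k]
      · rw [hpkeval, hqeval, hpk'eval k, hq'eval k, sub_self]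
        simp only [ha, hb, hS]
        field_simp [hPine k]
        ring
      · intro j _ hjk
        rw [hpkzero k j hjk]
        ring
      · simp
    have hN1root : N1.eval (x k) = 0 := by
      have := hroot'
      rw [hder] at this
      simpa using this
    obtain ⟨N2, hN2⟩ := dvd_iff_isRoot.mpr hN1root
    exact ⟨N2, by rw [hN1, hN2]; ring⟩
  -- the full product divides N
  have hcop : (↑(Finset.univ : Finset (Fin n)) : Set (Fin n)).Pairwise
      (Function.onFun IsCoprime fun k => (X - C (x k)) ^ 2) := by
    intro i _ j _ hij
    exact (Polynomial.pairwise_coprime_X_sub_C hx hij).pow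
  have hdvdP : (∏ k, (X - C (x k)) ^ 2) ∣ N :=
    Finset.prod_dvd_of_coprime hcop (fun k _ => hdvd2 k)
  -- degree computations
  have hpkmonic : ∀ k, (pk k).Monic :=
    fun k => monic_prod_of_monic _ _ (fun j _ => monic_X_sub_C _)
  have hpkdeg : ∀ k, (pk k).natDegree = d := by
    intro k
    rw [hpk]
    rw [Polynomial.natDegree_prod _ _ (fun j _ => X_sub_C_ne_zero _)]
    simp only [natDegree_X_sub_C, Finset.sum_const, smul_eq_mul, mul_one,
      Finset.card_erase_of_mem (Finset.mem_univ k), Finset.card_univ, Fintype.card_fin]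
    omega
  have hqmonic : q.Monic :=
    monic_prod_of_monic _ _ (fun i _ => (monic_X_sub_C _).pow _)
  have hqdeg : q.natDegree = d := by
    rw [hq, Polynomial.natDegree_prod _ _ (fun i _ => pow_ne_zero _ (X_sub_C_ne_zero _))]
    simp [natDegree_pow, natDegree_X_sub_C, hd]
  have hNdegle : N.natDegree ≤ 2 * d + 1 := by
    rw [hN]
    refine le_trans (Polynomial.natDegree_sub_le _ _) ?_
    apply max_le
    · rw [natDegree_pow, hqdeg]; omega
    · apply Polynomial.natDegree_sum_le_of_forall_le
      intro k _
      refine le_trans (Polynomial.natDegree_mul_le) ?_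
      have h1 : (C (a k) + C (b k) * (X - C (x k))).natDegree ≤ 1 := by
        refine le_trans (Polynomial.natDegree_add_le _ _) ?_
        apply max_le
        · simp
        · refine le_trans (Polynomial.natDegree_mul_le) ?_
          simp [natDegree_X_sub_C]
      have h2 : (pk k ^ 2).natDegree = 2 * d := by
        rw [natDegree_pow, hpkdeg]
      omega
  have hN0 : N = 0 := by
    by_contra h0
    have h1 := Polynomial.natDegree_le_of_dvd hdvdP h0
    have h2 : (∏ k, (X - C (x k)) ^ 2 : ℂ[X]).natDegree = 2 * n := by
      rw [Polynomial.natDegree_prod _ _ (fun k _ => pow_ne_zero _ (X_sub_C_ne_zero _))]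
      simp [natDegree_pow, natDegree_X_sub_C, mul_comm]
    omega
  -- extract the coefficient at 2*d+1
  have hsumb : ∑ k, b k = 0 := by
    have heq : q ^ 2 = ∑ k, (C (a k) + C (b k) * (X - C (x k))) * pk k ^ 2 := by
      have h := hN0
      rw [hN, sub_eq_zero] at h
      exact h
    have hco := congrArg (fun p => Polynomial.coeff p (2 * d + 1)) heq
    simp only [Polynomial.finset_sum_coeff] at hco
    have hlhs : (q ^ 2).coeff (2 * d + 1) = 0 :=
      coeff_eq_zero_of_natDegree_lt (by rw [natDegree_pow, hqdeg]; omega)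
    have hrhs : ∀ k : Fin n,
        ((C (a k) + C (b k) * (X - C (x k))) * pk k ^ 2).coeff (2 * d + 1) = b k := by
      intro k
      have hsplit : (C (a k) + C (b k) * (X - C (x k))) * pk k ^ 2
          = C (a k) * pk k ^ 2 + C (b k) * ((X - C (x k)) * pk k ^ 2) := by ring
      rw [hsplit, Polynomial.coeff_add, Polynomial.coeff_C_mul, Polynomial.coeff_C_mul]
      have hA : (pk k ^ 2).coeff (2 * d + 1) = 0 :=
        coeff_eq_zero_of_natDegree_lt (by rw [natDegree_pow, hpkdeg]; omega)
      have hMon : ((X - C (x k)) * pk k ^ 2).Monic :=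
        (monic_X_sub_C _).mul ((hpkmonic k).pow _)
      have hdeg : ((X - C (x k)) * pk k ^ 2).natDegree = 2 * d + 1 := by
        rw [Polynomial.natDegree_mul (X_sub_C_ne_zero _)
          (pow_ne_zero _ (hpkmonic k).ne_zero), natDegree_X_sub_C, natDegree_pow, hpkdeg]
        ring
      have hB := hMon.coeff_natDegree
      rw [hdeg] at hB
      rw [hA, hB]
      ring
    rw [hlhs, Finset.sum_congr rfl (fun k _ => hrhs k)] at hco
    exact hco.symm
  -- conclude
  have hfinal : ∑ k, b k = 2 * ∑ k, S k * (Qv k ^ 2 / Pi k ^ 2) := by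
    rw [Finset.mul_sum]
    apply Finset.sum_congr rfl
    intro k _
    rw [hb]
    ring
  have : (2 : ℂ) * ∑ k, S k * (Qv k ^ 2 / Pi k ^ 2) = 0 := by rw [← hfinal]; exact hsumb
  have h2 : ∑ k, S k * (Qv k ^ 2 / Pi k ^ 2) = 0 := by
    have h2ne : (2 : ℂ) ≠ 0 := two_ne_zero
    exact (mul_eq_zero.mp this).resolve_left h2ne
  exact h2


lemma phi_derivs {n m : ℕ} (x : Fin n → ℂ) (y : Fin m → ℂ) (r : Fin m → ℕ)
    (φ : ℂ → ℂ)
    (hφ : φ = fun z => (∏ j, (z - x j)) / ∏ i, (z - y i) ^ r i)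
    (k : Fin n) (hky : ∀ i, x k - y i ≠ 0) :
    deriv φ (x k) = (∏ j ∈ Finset.univ.erase k, (x k - x j)) / (∏ i, (x k - y i) ^ r i)
    ∧ iteratedDeriv 2 φ (x k) =
      2 * ((derivative (∏ j ∈ Finset.univ.erase k, (X - C (x j)))).eval (x k)
              * (∏ i, (x k - y i) ^ r i)
          - (∏ j ∈ Finset.univ.erase k, (x k - x j))
              * (derivative (∏ i, (X - C (y i)) ^ r i)).eval (x k))
        / (∏ i, (x k - y i) ^ r i) ^ 2 := by
  classical
  set pkP : ℂ[X] := ∏ j ∈ Finset.univ.erase k, (X - C (x j)) with hpkP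
  set qP : ℂ[X] := ∏ i, (X - C (y i)) ^ r i with hqP
  have hqPeval : ∀ z : ℂ, qP.eval z = ∏ i, (z - y i) ^ r i := by
    intro z; simp [hqP, eval_prod]
  have hpkPeval : ∀ z : ℂ, pkP.eval z = ∏ j ∈ Finset.univ.erase k, (z - x j) := by
    intro z; simp [hpkP, eval_prod]
  have hqne : qP.eval (x k) ≠ 0 := by
    rw [hqPeval]
    exact Finset.prod_ne_zero_iff.mpr (fun i _ => pow_ne_zero _ (hky i))
  set ψ : ℂ → ℂ := fun z => pkP.eval z / qP.eval z with hψdef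
  set D : ℂ → ℂ := fun z =>
    ((derivative pkP).eval z * qP.eval z - pkP.eval z * (derivative qP).eval z)
      / (qP.eval z) ^ 2 with hDdef
  have hφ' : φ = fun z => (z - x k) * ψ z := by
    funext z
    rw [hφ, hψdef]
    simp only [hpkPeval, hqPeval]
    rw [← Finset.mul_prod_erase Finset.univ (fun j => z - x j) (Finset.mem_univ k),
      mul_div_assoc]
  set U : Set ℂ := {z : ℂ | qP.eval z ≠ 0} with hU
  have hUopen : IsOpen U := IsOpen.preimage qP.continuous isOpen_ne
  have hUmem : x k ∈ U := hqne
  have hψd : ∀ z ∈ U, HasDerivAt ψ (D z) z := by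
    intro z hz
    exact (pkP.hasDerivAt z).div (qP.hasDerivAt z) hz
  have hφd : ∀ z ∈ U, HasDerivAt φ (ψ z + (z - x k) * D z) z := by
    intro z hz
    rw [hφ']
    have h1 : HasDerivAt (fun w : ℂ => w - x k) 1 z := (hasDerivAt_id z).sub_const _
    have h2 := h1.mul (hψd z hz)
    rw [one_mul] at h2
    exact h2
  have hd1 : deriv φ (x k) = ψ (x k) := by
    have := (hφd _ hUmem).deriv
    rw [this]
    simp
  constructor
  · rw [hd1, hψdef]
    simp only [hpkPeval, hqPeval]
  · have hev : deriv φ =ᶠ[nhds (x k)] fun z => ψ z + (z - x k) * D z := by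
      filter_upwards [hUopen.mem_nhds hUmem] with z hz
      exact (hφd z hz).deriv
    have h2 : iteratedDeriv 2 φ (x k) = deriv (deriv φ) (x k) := by
      rw [iteratedDeriv_succ, iteratedDeriv_one]
    rw [h2, hev.deriv_eq]
    have hDdiff : DifferentiableAt ℂ D (x k) := by
      rw [hDdef]
      apply DifferentiableAt.div
      · exact ((pkP.derivative.differentiable.differentiableAt.mul
          qP.differentiable.differentiableAt).sub
          (pkP.differentiable.differentiableAt.mul
            qP.derivative.differentiable.differentiableAt))
      · exact (qP.differentiable.differentiableAt).pow 2
      · exact pow_ne_zero 2 hqne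
    have h3 : HasDerivAt (fun z => ψ z + (z - x k) * D z)
        (D (x k) + (1 * D (x k) + (x k - x k) * deriv D (x k))) (x k) := by
      have ha := hψd _ hUmem
      have hb : HasDerivAt (fun w : ℂ => w - x k) 1 (x k) := (hasDerivAt_id _).sub_const _
      exact ha.add (hb.mul hDdiff.hasDerivAt)
    rw [h3.deriv]
    rw [hDdef]
    simp only [hpkPeval, hqPeval]
    ring


open Filter Topology Finset

/-- If `n = 1 + ∑ rᵢ` then the sum over `k` of the residues `-φ''(x_k)/φ'(x_k)³` of
`1/φ²` vanishes; consequently if the Stieltjes–Bethe equations hold at `k = 1,…,n-1`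
they also hold at `k = n`. -/
theorem stmt_8 (n m : ℕ) (hn : 0 < n) (hm : 0 < m)
    (x : Fin n → ℂ) (y : Fin m → ℂ) (r : Fin m → ℕ) (hr : ∀ i, 0 < r i)
    (hx : Function.Injective x) (hy : Function.Injective y)
    (hxy : ∀ j i, x j ≠ y i)
    (hnr : n = 1 + ∑ i, r i)
    (φ : ℂ → ℂ)
    (hφ : φ = fun z => (∏ j, (z - x j)) / ∏ i, (z - y i) ^ r i) :
    (∑ k, iteratedDeriv 2 φ (x k) / (deriv φ (x k)) ^ 3 = 0) ∧
    ((∀ k : Fin n, (k : ℕ) + 1 < n →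
        ∑ i, (r i : ℂ) / (x k - y i)
          - ∑ j ∈ Finset.univ.erase k, 1 / (x k - x j) = 0) →
      ∑ i, (r i : ℂ) / (x ⟨n - 1, Nat.sub_lt hn Nat.one_pos⟩ - y i)
        - ∑ j ∈ Finset.univ.erase (⟨n - 1, Nat.sub_lt hn Nat.one_pos⟩ : Fin n),
            1 / (x ⟨n - 1, Nat.sub_lt hn Nat.one_pos⟩ - x j) = 0) := by
  classical
  have hky : ∀ (k : Fin n) (i : Fin m), x k - y i ≠ 0 :=
    fun k i => sub_ne_zero.mpr (hxy k i)
  have hxx : ∀ k : Fin n, ∀ j ∈ Finset.univ.erase k, x k - x j ≠ 0 := by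
    intro k j hj
    rw [Finset.mem_erase] at hj
    exact sub_ne_zero.mpr fun h => hj.1 (hx h.symm)
  set Pi : Fin n → ℂ := fun k => ∏ j ∈ Finset.univ.erase k, (x k - x j) with hPi
  set Qv : Fin n → ℂ := fun k => ∏ i, (x k - y i) ^ r i with hQv
  set S : Fin n → ℂ := fun k =>
    ∑ i, (r i : ℂ) / (x k - y i) - ∑ j ∈ Finset.univ.erase k, 1 / (x k - x j) with hS
  have hPine : ∀ k, Pi k ≠ 0 := fun k =>
    Finset.prod_ne_zero_iff.mpr (fun j hj => hxx k j hj)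
  have hQvne : ∀ k, Qv k ≠ 0 := fun k =>
    Finset.prod_ne_zero_iff.mpr (fun i _ => pow_ne_zero _ (hky k i))
  have hcore : ∑ k, S k * (Qv k ^ 2 / Pi k ^ 2) = 0 :=
    core_identity n m hn x y r hr hx hxy hnr
  constructor
  · have hterm : ∀ k, iteratedDeriv 2 φ (x k) / (deriv φ (x k)) ^ 3
        = (-2) * (S k * (Qv k ^ 2 / Pi k ^ 2)) := by
      intro k
      obtain ⟨hd, hdd⟩ := phi_derivs x y r φ hφ k (hky k)
      rw [hd, hdd, eval_deriv_prod_lin _ _ _ (hxx k),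
        eval_deriv_prod_pow _ _ _ (fun i _ => hr i) _ (fun i _ => hky k i)]
      rw [hS]
      set A : ℂ := ∑ j ∈ Finset.univ.erase k, 1 / (x k - x j) with hA
      set B : ℂ := ∑ i, (r i : ℂ) / (x k - y i) with hB
      have h1 : Pi k ≠ 0 := hPine k
      have h2 : Qv k ≠ 0 := hQvne k
      show 2 * (Pi k * A * Qv k - Pi k * (Qv k * B)) / Qv k ^ 2 / (Pi k / Qv k) ^ 3
          = -2 * ((B - A) * (Qv k ^ 2 / Pi k ^ 2))
      field_simp
      ring
    rw [Finset.sum_congr rfl (fun k _ => hterm k), ← Finset.mul_sum, hcore, mul_zero]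
  · intro hyp
    set k0 : Fin n := ⟨n - 1, Nat.sub_lt hn Nat.one_pos⟩ with hk0
    have hall : ∀ k : Fin n, k ≠ k0 → S k = 0 := by
      intro k hk
      apply hyp
      have h1 : (k : ℕ) < n := k.isLt
      have h2 : (k : ℕ) ≠ n - 1 := by
        intro h
        exact hk (Fin.ext (by rw [h]))
      omega
    have hsingle : ∑ k, S k * (Qv k ^ 2 / Pi k ^ 2) = S k0 * (Qv k0 ^ 2 / Pi k0 ^ 2) := by
      apply Finset.sum_eq_single
      · intro j _ hj
        rw [hall j hj, zero_mul]
      · intro h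
        exact absurd (Finset.mem_univ k0) h
    rw [hsingle] at hcore
    have hcne : Qv k0 ^ 2 / Pi k0 ^ 2 ≠ 0 :=
      div_ne_zero (pow_ne_zero _ (hQvne k0)) (pow_ne_zero _ (hPine k0))
    have := (mul_eq_zero.mp hcore).resolve_right hcne
    exact this
end

section
/- Assume n = 1 + ∑_{i=1}^m r_i. The following are equivalent: (i) the Stieltjes–Bethe equations ∑_{i=1}^m r_i/(x_k−y_i) − ∑_{j=1, j≠k}^n 1/(x_k−x_j) = 0 hold for every k = 1,…,n−1; (ii) there exist polynomials p, q ∈ ℂ[z] with q ≠ 0 such that for every z ∈ ℂ with q(z) ≠ 0 and z ∉ {x₁,…,xₙ} ∪ {y₁,…,y_m}, the derivative of the rational function p/q at z equals 1/φ(z)². In other words, the Abelian integral F(z) = ∫ dz/φ(z)² is a (single-valued) rational function precisely when the Stieltjes–Bethe equations hold. -/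
open Filter Topology Finset

section Aux
open Polynomial

lemma aux_eval_deriv_prod {ι : Type*} [DecidableEq ι] (s : Finset ι) (f : ι → Polynomial ℂ) (c : ℂ) :
    ((∏ i ∈ s, f i).derivative).eval c
      = ∑ i ∈ s, ((f i).derivative.eval c) * (∏ j ∈ s.erase i, f j).eval c := by
  induction s using Finset.induction_on with
  | empty => simp
  | insert a s ha ih =>
    rw [Finset.prod_insert ha, derivative_mul, eval_add, eval_mul, eval_mul, ih,
      Finset.sum_insert ha, Finset.erase_insert ha, Finset.mul_sum]
    congr 1
    refine Finset.sum_congr rfl fun i hi => ?_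
    rw [Finset.erase_insert_of_ne (by rintro rfl; exact ha hi), Finset.prod_insert
      (fun h => ha (Finset.mem_of_mem_erase h)), eval_mul]
    ring

lemma aux_double_root (c : ℂ) (E : Polynomial ℂ) (h0 : E.eval c = 0)
    (h1 : E.derivative.eval c = 0) : (X - C c) ^ 2 ∣ E := by
  obtain ⟨E₂, hE2⟩ := dvd_iff_isRoot.mpr h0
  have hd : E.derivative = E₂ + (X - C c) * E₂.derivative := by
    rw [hE2, derivative_mul, derivative_X_sub_C, one_mul]
  have h2 : E₂.eval c = 0 := by
    have := h1; rw [hd] at this; simpa using this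
  obtain ⟨E₃, h3⟩ := dvd_iff_isRoot.mpr h2
  exact ⟨E₃, by rw [hE2, h3]; ring⟩

lemma aux_fact (c : ℂ) (F : Polynomial ℂ) (hF : F ≠ 0) :
    ∃ F₁ : Polynomial ℂ, F = (X - C c) ^ (rootMultiplicity c F) * F₁ ∧ F₁.eval c ≠ 0 := by
  obtain ⟨F₁, h1⟩ := pow_rootMultiplicity_dvd F c
  refine ⟨F₁, h1, fun h0 => ?_⟩
  obtain ⟨F₂, h2⟩ := dvd_iff_isRoot.mpr h0
  refine pow_rootMultiplicity_not_dvd hF c ?_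
  have hd : (X - C c) ^ (rootMultiplicity c F) * (X - C c)
      ∣ (X - C c) ^ (rootMultiplicity c F) * F₁ :=
    mul_dvd_mul_left _ ⟨F₂, h2⟩
  rw [← h1] at hd
  rwa [pow_succ]

lemma aux_mul_deriv (c : ℂ) (α : ℕ) (f : Polynomial ℂ) :
    (X - C c) * ((X - C c) ^ α * f).derivative
      = (X - C c) ^ α * (C (α : ℂ) * f + (X - C c) * f.derivative) := by
  rw [derivative_mul, derivative_pow, derivative_X_sub_C]
  cases α with
  | zero => simp
  | succ γ =>
    have h : (X - C c) ^ (γ + 1) = (X - C c) ^ γ * (X - C c) := pow_succ _ _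
    simp only [Nat.add_sub_cancel]
    rw [h]; push_cast; ring

lemma aux_wronskian_mult (c : ℂ) (P Q : Polynomial ℂ) (hP : P ≠ 0) (hQ : Q ≠ 0)
    (hK : P.derivative * Q - P * Q.derivative ≠ 0) :
    rootMultiplicity c (P.derivative * Q - P * Q.derivative) + 1
      ≠ 2 * rootMultiplicity c Q := by
  set α := rootMultiplicity c P with hα
  set β := rootMultiplicity c Q with hβ
  obtain ⟨P₁, hP1, hP1c⟩ := aux_fact c P hP
  obtain ⟨Q₁, hQ1, hQ1c⟩ := aux_fact c Q hQ
  set K := P.derivative * Q - P * Q.derivative with hKdef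
  set R := (C (α : ℂ) - C (β : ℂ)) * (P₁ * Q₁)
      + (X - C c) * (P₁.derivative * Q₁ - P₁ * Q₁.derivative) with hRdef
  have hXne : (X - C c : Polynomial ℂ) ≠ 0 := X_sub_C_ne_zero c
  have hKey : (X - C c) * K = (X - C c) ^ (α + β) * R := by
    have e0 : (X - C c) * K
        = ((X - C c) * ((X - C c) ^ α * P₁).derivative) * ((X - C c) ^ β * Q₁)
          - ((X - C c) ^ α * P₁) * ((X - C c) * ((X - C c) ^ β * Q₁).derivative) := by
      rw [← hP1, ← hQ1]; ring
    rw [e0, aux_mul_deriv, aux_mul_deriv, hRdef]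
    ring
  have hXK0 : (X - C c) * K ≠ 0 := mul_ne_zero hXne hK
  have hmulXK : rootMultiplicity c ((X - C c) * K) = 1 + rootMultiplicity c K := by
    rw [rootMultiplicity_mul hXK0, rootMultiplicity_X_sub_C_self]
  rcases eq_or_ne α β with hEq | hNe
  · have hW : (X - C c) ^ (α + β + 1) ∣ (X - C c) * K := by
      refine ⟨P₁.derivative * Q₁ - P₁ * Q₁.derivative, ?_⟩
      rw [hKey, hRdef, hEq, sub_self]
      ring
    have hle := (le_rootMultiplicity_iff hXK0).mpr hW
    omega
  · have hRc : R.eval c ≠ 0 := by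
      have he : R.eval c = ((α : ℂ) - (β : ℂ)) * (P₁.eval c * Q₁.eval c) := by
        simp [hRdef]
      rw [he]
      exact mul_ne_zero (sub_ne_zero.mpr (fun h => hNe (Nat.cast_injective h)))
        (mul_ne_zero hP1c hQ1c)
    have hR0 : R ≠ 0 := fun h => hRc (by rw [h]; simp)
    have hmulR : rootMultiplicity c R = 0 := rootMultiplicity_eq_zero hRc
    have hrhs0 : (X - C c) ^ (α + β) * R ≠ 0 := mul_ne_zero (pow_ne_zero _ hXne) hR0
    have he2 : rootMultiplicity c ((X - C c) ^ (α + β) * R) = (α + β) + 0 := by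
      rw [rootMultiplicity_mul hrhs0, rootMultiplicity_X_sub_C_pow, hmulR]
    rw [hKey, he2] at hmulXK
    omega

end Aux

open Polynomial in
/-- The Stieltjes–Bethe equations at `k = 1,…,n-1` hold iff the Abelian integral
`F = ∫ dz/φ(z)²` is a rational function, i.e. there are polynomials `p, q` with
`(p/q)' = 1/φ²` away from the poles. -/
theorem stmt_13 (n m : ℕ) (hn : 0 < n) (hm : 0 < m)
    (x : Fin n → ℂ) (y : Fin m → ℂ) (r : Fin m → ℕ) (hr : ∀ i, 0 < r i)
    (hx : Function.Injective x) (hy : Function.Injective y)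
    (hxy : ∀ j i, x j ≠ y i)
    (hnr : n = 1 + ∑ i, r i)
    (φ : ℂ → ℂ)
    (hφ : φ = fun z => (∏ j, (z - x j)) / ∏ i, (z - y i) ^ r i) :
    (∀ k : Fin n, (k : ℕ) + 1 < n →
      ∑ i, (r i : ℂ) / (x k - y i)
        - ∑ j ∈ Finset.univ.erase k, 1 / (x k - x j) = 0) ↔
    (∃ p q : Polynomial ℂ, q ≠ 0 ∧
      ∀ z : ℂ, q.eval z ≠ 0 → (∀ j, z ≠ x j) → (∀ i, z ≠ y i) →
        deriv (fun w => p.eval w / q.eval w) z = 1 / (φ z) ^ 2) := by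
  classical
  -- the three basic polynomials
  set A : Polynomial ℂ := ∏ j, (X - C (x j)) with hAdef
  set B : Polynomial ℂ := ∏ i, (X - C (y i)) ^ r i with hBdef
  set Ak : Fin n → Polynomial ℂ := fun k => ∏ j ∈ Finset.univ.erase k, (X - C (x j))
    with hAkdef
  have hA_eval : ∀ z : ℂ, A.eval z = ∏ j, (z - x j) := by
    intro z; simp [hAdef, eval_prod]
  have hB_eval : ∀ z : ℂ, B.eval z = ∏ i, (z - y i) ^ r i := by
    intro z; simp [hBdef, eval_prod]
  have hAk_eval : ∀ (k) (z : ℂ), (Ak k).eval z = ∏ j ∈ Finset.univ.erase k, (z - x j) := by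
    intro k z; simp [hAkdef, eval_prod]
  have hA0 : A ≠ 0 := Finset.prod_ne_zero_iff.mpr fun j _ => X_sub_C_ne_zero _
  have hB0 : B ≠ 0 := Finset.prod_ne_zero_iff.mpr fun i _ => pow_ne_zero _ (X_sub_C_ne_zero _)
  have hAfac : ∀ k, A = (X - C (x k)) * Ak k :=
    fun k => (Finset.mul_prod_erase _ _ (Finset.mem_univ k)).symm
  have hAz : ∀ z : ℂ, (∀ j, z ≠ x j) → A.eval z ≠ 0 := by
    intro z hz; rw [hA_eval]
    exact Finset.prod_ne_zero_iff.mpr fun j _ => sub_ne_zero.mpr (hz j)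
  have hBz : ∀ z : ℂ, (∀ i, z ≠ y i) → B.eval z ≠ 0 := by
    intro z hz; rw [hB_eval]
    exact Finset.prod_ne_zero_iff.mpr fun i _ => pow_ne_zero _ (sub_ne_zero.mpr (hz i))
  have hAkc : ∀ k, (Ak k).eval (x k) ≠ 0 := by
    intro k; rw [hAk_eval]
    refine Finset.prod_ne_zero_iff.mpr fun j hj => sub_ne_zero.mpr fun h => ?_
    exact Finset.ne_of_mem_erase hj (hx h).symm
  have hBc : ∀ k, B.eval (x k) ≠ 0 := fun k => hBz _ (fun i => hxy k i)
  have hAc : ∀ k, A.eval (x k) = 0 := by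
    intro k; rw [hAfac k]; simp
  have hA'c : ∀ k, A.derivative.eval (x k) = (Ak k).eval (x k) := by
    intro k; rw [hAfac k, derivative_mul, derivative_X_sub_C]; simp
  -- logarithmic derivatives
  have hBder : ∀ c : ℂ, (∀ i, c ≠ y i) →
      B.derivative.eval c = B.eval c * ∑ i, (r i : ℂ) / (c - y i) := by
    intro c hc
    rw [hBdef, aux_eval_deriv_prod, Finset.mul_sum]
    refine Finset.sum_congr rfl fun i _ => ?_
    have hci : c - y i ≠ 0 := sub_ne_zero.mpr (hc i)
    have hsplit : (∏ i, (X - C (y i)) ^ r i : Polynomial ℂ).eval c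
        = ((X - C (y i)) ^ r i).eval c
          * (∏ j ∈ Finset.univ.erase i, (X - C (y j)) ^ r j).eval c := by
      rw [← Finset.mul_prod_erase Finset.univ (fun i => ((X : Polynomial ℂ) - C (y i)) ^ r i)
        (Finset.mem_univ i), eval_mul]
    rw [hsplit, derivative_pow, derivative_X_sub_C]
    simp only [eval_mul, eval_pow, eval_sub, eval_X, eval_C, mul_one, eval_natCast]
    have hpow : (c - y i) ^ r i = (c - y i) ^ (r i - 1) * (c - y i) := by
      conv_lhs => rw [show r i = (r i - 1) + 1 from (Nat.succ_pred_eq_of_pos (hr i)).symm]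
      rw [pow_succ]
    rw [hpow]
    field_simp
  have hAkder : ∀ k, (Ak k).derivative.eval (x k)
      = (Ak k).eval (x k) * ∑ j ∈ Finset.univ.erase k, 1 / (x k - x j) := by
    intro k
    rw [hAkdef]
    rw [aux_eval_deriv_prod, Finset.mul_sum]
    refine Finset.sum_congr rfl fun j hj => ?_
    have hxj : x k - x j ≠ 0 :=
      sub_ne_zero.mpr fun h => Finset.ne_of_mem_erase hj (hx h).symm
    have hsplit : (∏ l ∈ Finset.univ.erase k, (X - C (x l)) : Polynomial ℂ).eval (x k)
        = ((X - C (x j)) : Polynomial ℂ).eval (x k)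
          * (∏ l ∈ (Finset.univ.erase k).erase j, (X - C (x l))).eval (x k) := by
      rw [← Finset.mul_prod_erase (Finset.univ.erase k)
        (fun l => (X : Polynomial ℂ) - C (x l)) hj, eval_mul]
    rw [hsplit, derivative_X_sub_C]
    simp only [eval_one, eval_sub, eval_X, eval_C, one_mul]
    field_simp
  have hSBiff : ∀ k : Fin n,
      (∑ i, (r i : ℂ) / (x k - y i) - ∑ j ∈ Finset.univ.erase k, 1 / (x k - x j) = 0)
        ↔ B.derivative.eval (x k) * (Ak k).eval (x k)
            = B.eval (x k) * (Ak k).derivative.eval (x k) := by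
    intro k
    rw [hBder _ (fun i => hxy k i), hAkder k, sub_eq_zero]
    constructor
    · intro h; rw [h]; ring
    · intro h
      refine mul_left_cancel₀ (mul_ne_zero (hBc k) (hAkc k)) ?_
      linear_combination h
  -- the value of 1/φ²
  have hphi : ∀ z : ℂ, (∀ j, z ≠ x j) → (∀ i, z ≠ y i) →
      1 / (φ z) ^ 2 = (B.eval z) ^ 2 / (A.eval z) ^ 2 := by
    intro z hzx hzy
    rw [hφ]
    show 1 / ((∏ j, (z - x j)) / ∏ i, (z - y i) ^ r i) ^ 2 = _
    rw [← hA_eval, ← hB_eval, div_pow, one_div, inv_div]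
  -- degrees
  have hone : (1 : ℕ) ≤ ∑ i, r i := le_trans (hr ⟨0, hm⟩)
    (Finset.single_le_sum (f := r) (fun i _ => Nat.zero_le _) (Finset.mem_univ _))
  have hn2 : 2 ≤ n := by omega
  have hdegA : A.natDegree = n := by
    rw [hAdef, natDegree_prod _ _ (fun j _ => X_sub_C_ne_zero _)]
    simp [natDegree_X_sub_C, Finset.card_univ]
  have hdegB : B.natDegree = n - 1 := by
    rw [hBdef, natDegree_prod _ _ (fun i _ => pow_ne_zero _ (X_sub_C_ne_zero _))]
    simp only [natDegree_pow, natDegree_X_sub_C, mul_one]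
    omega
  have hdegAk : ∀ k, (Ak k).natDegree = n - 1 := by
    intro k
    rw [hAkdef]
    rw [natDegree_prod _ _ (fun j _ => X_sub_C_ne_zero _)]
    simp [natDegree_X_sub_C, Finset.card_erase_of_mem, Finset.card_univ]
  -- the crucial constants
  obtain ⟨b, hb⟩ : ∃ b : Fin n → ℂ, ∀ k, b k * ((Ak k).eval (x k)) ^ 2 = (B.eval (x k)) ^ 2 :=
    ⟨fun k => (B.eval (x k)) ^ 2 / ((Ak k).eval (x k)) ^ 2,
      fun k => div_mul_cancel₀ _ (pow_ne_zero 2 (hAkc k))⟩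
  constructor
  · -- Forward direction: Stieltjes–Bethe ⟹ rational antiderivative
    intro hSB
    set p : Polynomial ℂ := ∑ k, C (- b k) * Ak k with hpdef
    refine ⟨p, A, hA0, ?_⟩
    set E : Polynomial ℂ := p.derivative * A - p * A.derivative - B * B with hEdef
    have hpc : ∀ k, p.eval (x k) = - b k * (Ak k).eval (x k) := by
      intro k
      rw [hpdef, eval_finset_sum]
      rw [Finset.sum_eq_single k]
      · simp
      · intro j _ hjk
        have hz : (Ak j).eval (x k) = 0 := by
          rw [hAk_eval]
          exact Finset.prod_eq_zero
            (Finset.mem_erase.mpr ⟨Ne.symm hjk, Finset.mem_univ _⟩) (by simp)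
        simp [hz]
      · simp
    have hEc : ∀ k, E.eval (x k) = 0 := by
      intro k
      simp only [hEdef, eval_sub, eval_mul, hAc, hpc, hA'c, mul_zero, zero_sub]
      linear_combination hb k
    have hA''c : ∀ k, A.derivative.derivative.eval (x k) = 2 * (Ak k).derivative.eval (x k) := by
      intro k
      have hD : A.derivative.derivative
          = (Ak k).derivative
            + ((Ak k).derivative + (X - C (x k)) * (Ak k).derivative.derivative) := by
        rw [hAfac k]
        rw [derivative_mul, derivative_X_sub_C, one_mul]
        rw [derivative_add, derivative_mul, derivative_X_sub_C, one_mul]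
      rw [hD]
      simp only [eval_add, eval_mul, eval_sub, eval_X, eval_C, sub_self, zero_mul, add_zero]
      ring
    have hE'c : ∀ k : Fin n, (k : ℕ) + 1 < n → E.derivative.eval (x k) = 0 := by
      intro k hk
      have hSBk := (hSBiff k).mp (hSB k hk)
      have hder : E.derivative
          = p.derivative.derivative * A - p * A.derivative.derivative
            - (B.derivative * B + B * B.derivative) := by
        rw [hEdef]
        simp only [derivative_sub, derivative_mul]
        ring
      rw [hder]
      simp only [eval_sub, eval_mul, eval_add, hAc, hpc, hA''c, mul_zero, zero_sub]
      have h2 : ((- (- b k * (Ak k).eval (x k) * (2 * (Ak k).derivative.eval (x k))))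
          - (B.derivative.eval (x k) * B.eval (x k) + B.eval (x k) * B.derivative.eval (x k)))
          * (Ak k).eval (x k) = 0 := by
        linear_combination 2 * (Ak k).derivative.eval (x k) * hb k
          - 2 * B.eval (x k) * hSBk
      have h3 := mul_eq_zero.mp h2
      rcases h3 with h3 | h3
      · linear_combination h3
      · exact absurd h3 (hAkc k)
    have hdegp : p.natDegree ≤ n - 1 := by
      rw [hpdef]
      refine natDegree_sum_le_of_forall_le _ _ fun k _ => ?_
      refine le_trans (natDegree_mul_le) ?_
      simp [natDegree_C, hdegAk k]
    have hdegE : E.natDegree ≤ 2 * n - 2 := by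
      have h1 : (p.derivative * A).natDegree ≤ 2 * n - 2 := by
        refine le_trans natDegree_mul_le ?_
        have := natDegree_derivative_le p
        omega
      have h2 : (p * A.derivative).natDegree ≤ 2 * n - 2 := by
        refine le_trans natDegree_mul_le ?_
        have := natDegree_derivative_le A
        omega
      have h3 : (B * B).natDegree ≤ 2 * n - 2 := by
        refine le_trans natDegree_mul_le ?_
        omega
      rw [hEdef]
      refine le_trans (natDegree_sub_le _ _) (max_le ?_ h3)
      exact le_trans (natDegree_sub_le _ _) (max_le h1 h2)
    have hE0 : E = 0 := by
      by_contra hE0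
      have hm1 : ∀ k, 1 ≤ rootMultiplicity (x k) E :=
        fun k => (rootMultiplicity_pos hE0).mpr (hEc k)
      have hm2 : ∀ k : Fin n, (k : ℕ) + 1 < n → 2 ≤ rootMultiplicity (x k) E := by
        intro k hk
        exact (le_rootMultiplicity_iff hE0).mpr (aux_double_root _ _ (hEc k) (hE'c k hk))
      set last : Fin n := ⟨n - 1, by omega⟩ with hlastdef
      have hsum : 2 * n - 1 ≤ ∑ k : Fin n, rootMultiplicity (x k) E := by
        have hstep : ∑ k ∈ Finset.univ.erase last, 2
            ≤ ∑ k ∈ Finset.univ.erase last, rootMultiplicity (x k) E := by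
          refine Finset.sum_le_sum fun k hk => hm2 k ?_
          have h1 : (k : ℕ) < n := k.isLt
          have h2 : k ≠ last := Finset.ne_of_mem_erase hk
          have h3 : (k : ℕ) ≠ n - 1 := fun h => h2 (Fin.ext h)
          omega
        have hconst : ∑ _k ∈ Finset.univ.erase last, 2 = 2 * (n - 1) := by
          rw [Finset.sum_const, Finset.card_erase_of_mem (Finset.mem_univ _),
            Finset.card_univ, Fintype.card_fin]
          ring
        have htot : ∑ k ∈ Finset.univ.erase last, rootMultiplicity (x k) E
            + rootMultiplicity (x last) E = ∑ k : Fin n, rootMultiplicity (x k) E :=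
          Finset.sum_erase_add Finset.univ
            (fun k => rootMultiplicity (x k) E) (Finset.mem_univ last)
        have hlast1 := hm1 last
        omega
      have hcard : ∑ k : Fin n, rootMultiplicity (x k) E ≤ Multiset.card E.roots := by
        have h1 : ∑ k : Fin n, rootMultiplicity (x k) E
            = ∑ a ∈ Finset.univ.image x, E.roots.count a := by
          rw [Finset.sum_image (fun a _ c _ h => hx h)]
          simp [count_roots]
        rw [h1]
        have h2 : Finset.univ.image x ⊆ E.roots.toFinset := by
          intro a ha
          obtain ⟨k, _, rfl⟩ := Finset.mem_image.mp ha
          rw [Multiset.mem_toFinset]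
          exact mem_roots'.mpr ⟨hE0, hEc k⟩
        calc ∑ a ∈ Finset.univ.image x, E.roots.count a
            ≤ ∑ a ∈ E.roots.toFinset, E.roots.count a := Finset.sum_le_sum_of_subset h2
          _ = Multiset.card E.roots := E.roots.toFinset_sum_count_eq
      have hcr := E.card_roots'
      omega
    intro z hqz hzx hzy
    have hderiv : deriv (fun w => p.eval w / A.eval w) z
        = (p.derivative.eval z * A.eval z - p.eval z * A.derivative.eval z)
          / (A.eval z) ^ 2 := by
      exact ((p.hasDerivAt z).div (A.hasDerivAt z) hqz).deriv
    rw [hderiv, hphi z hzx hzy]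
    have hnum : p.derivative.eval z * A.eval z - p.eval z * A.derivative.eval z
        = (B.eval z) ^ 2 := by
      have h := congrArg (eval z) hE0
      simp only [hEdef, eval_sub, eval_mul, eval_zero] at h
      linear_combination h
    rw [hnum]
  · -- Converse: rational antiderivative ⟹ Stieltjes–Bethe
    rintro ⟨p, q, hq0, hpq⟩ k hk
    set D : Polynomial ℂ := p.derivative * q - p * q.derivative with hDdef
    have hid : D * A ^ 2 = B ^ 2 * q ^ 2 := by
      apply eq_of_infinite_eval_eq
      have hfin : Set.Finite ((↑q.roots.toFinset : Set ℂ)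
          ∪ (Set.range x ∪ Set.range y)) :=
        Set.Finite.union (q.roots.toFinset.finite_toSet)
          (Set.Finite.union (Set.finite_range x) (Set.finite_range y))
      apply Set.Infinite.mono ?_ (Set.Finite.infinite_compl hfin)
      intro z hz
      simp only [Set.mem_compl_iff, Set.mem_union, not_or, Finset.mem_coe,
        Multiset.mem_toFinset, Set.mem_range, not_exists] at hz
      obtain ⟨hz1, hz2, hz3⟩ := hz
      have hzq : q.eval z ≠ 0 := fun h => hz1 (mem_roots'.mpr ⟨hq0, h⟩)
      have hzx : ∀ j, z ≠ x j := fun j h => hz2 j h.symm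
      have hzy : ∀ i, z ≠ y i := fun i h => hz3 i h.symm
      have hderiv : deriv (fun w => p.eval w / q.eval w) z
          = (p.derivative.eval z * q.eval z - p.eval z * q.derivative.eval z)
            / (q.eval z) ^ 2 :=
        ((p.hasDerivAt z).div (q.hasDerivAt z) hzq).deriv
      have heq := hpq z hzq hzx hzy
      rw [hderiv, hphi z hzx hzy] at heq
      have hAz' := hAz z hzx
      show (D * A ^ 2).eval z = (B ^ 2 * q ^ 2).eval z
      simp only [hDdef, eval_mul, eval_pow, eval_sub]
      field_simp at heq
      linear_combination heq
    set c : ℂ := x k with hcdef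
    have hD0 : D ≠ 0 := by
      intro h
      rw [h, zero_mul] at hid
      exact (mul_ne_zero (pow_ne_zero _ hB0) (pow_ne_zero _ hq0)) hid.symm
    have hqc : q.eval c = 0 := by
      have h := congrArg (eval c) hid
      simp only [eval_mul, eval_pow, hAc k] at h
      have h2 : (B.eval c) ^ 2 * (q.eval c) ^ 2 = 0 := by
        have h0 : A.eval c = 0 := hAc k
        rw [h0] at h; linear_combination - h
      rcases mul_eq_zero.mp h2 with h3 | h3
      · exact absurd (pow_eq_zero_iff two_ne_zero |>.mp h3) (hBc k)
      · exact pow_eq_zero_iff two_ne_zero |>.mp h3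
    have hs1 : 1 ≤ rootMultiplicity c q := (rootMultiplicity_pos hq0).mpr hqc
    set s : ℕ := rootMultiplicity c q with hsdef
    set H : Polynomial ℂ := B ^ 2 - C (b k) * (Ak k) ^ 2 with hHdef
    have hHc : H.eval c = 0 := by
      simp only [hHdef, eval_sub, eval_mul, eval_pow, eval_C]
      linear_combination - hb k
    set H₁ : Polynomial ℂ := H /ₘ (X - C c) with hH1def
    have hH1 : (X - C c) * H₁ = H := mul_divByMonic_eq_iff_isRoot.mpr hHc
    set P : Polynomial ℂ := p * (X - C c) + C (b k) * q with hPdef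
    set Q : Polynomial ℂ := q * (X - C c) with hQdef
    have hkey : (P.derivative * Q - P * Q.derivative) * A ^ 2
        = (X - C c) ^ 3 * H₁ * q ^ 2 := by
      have e1 : P.derivative * Q - P * Q.derivative
          = (X - C c) ^ 2 * D - C (b k) * q ^ 2 := by
        rw [hPdef, hQdef, hDdef]
        simp only [derivative_add, derivative_mul, derivative_X_sub_C, derivative_C,
          mul_one, zero_mul, add_zero, zero_add]
        ring
      calc (P.derivative * Q - P * Q.derivative) * A ^ 2
          = (X - C c) ^ 2 * (D * A ^ 2) - C (b k) * q ^ 2 * A ^ 2 := by rw [e1]; ring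
        _ = (X - C c) ^ 2 * (B ^ 2 * q ^ 2)
            - C (b k) * q ^ 2 * ((X - C c) * Ak k) ^ 2 := by rw [hid, ← hAfac k]
        _ = (X - C c) ^ 2 * q ^ 2 * H := by rw [hHdef]; ring
        _ = (X - C c) ^ 3 * H₁ * q ^ 2 := by rw [← hH1]; ring
    have hXne : (X - C c : Polynomial ℂ) ≠ 0 := X_sub_C_ne_zero c
    have hH1c : H₁.eval c = 0 := by
      by_contra hne
      have hH10 : H₁ ≠ 0 := fun h => hne (by rw [h]; simp)
      have hrhs0 : (X - C c) ^ 3 * H₁ * q ^ 2 ≠ 0 :=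
        mul_ne_zero (mul_ne_zero (pow_ne_zero _ hXne) hH10) (pow_ne_zero _ hq0)
      have hK0 : P.derivative * Q - P * Q.derivative ≠ 0 := by
        intro h
        rw [h, zero_mul] at hkey
        exact hrhs0 hkey.symm
      have hQ0 : Q ≠ 0 := mul_ne_zero hq0 hXne
      have hP0 : P ≠ 0 := by
        intro h
        rw [h] at hK0
        simp at hK0
      have hmultA : rootMultiplicity c A = 1 := by
        have hAne : (X - C c) * Ak k ≠ 0 := by rw [← hAfac k]; exact hA0
        rw [hAfac k, rootMultiplicity_mul hAne, rootMultiplicity_X_sub_C_self,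
          rootMultiplicity_eq_zero (hAkc k)]
      have hmultQ : rootMultiplicity c Q = s + 1 := by
        rw [hQdef, rootMultiplicity_mul hQ0, rootMultiplicity_X_sub_C_self]
      have hmultK : rootMultiplicity c (P.derivative * Q - P * Q.derivative) + 2
          = 3 + 2 * s := by
        have hlhs0 : (P.derivative * Q - P * Q.derivative) * A ^ 2 ≠ 0 :=
          mul_ne_zero hK0 (pow_ne_zero _ hA0)
        have hL := congrArg (rootMultiplicity c) hkey
        have hA2 : rootMultiplicity c (A ^ 2) = 2 := by
          rw [pow_two, rootMultiplicity_mul (mul_ne_zero hA0 hA0), hmultA]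
        rw [rootMultiplicity_mul hlhs0, hA2] at hL
        have hr3 : rootMultiplicity c ((X - C c) ^ 3 * H₁ * q ^ 2) = 3 + 0 + 2 * s := by
          have h30 : (X - C c) ^ 3 * H₁ ≠ 0 := mul_ne_zero (pow_ne_zero _ hXne) hH10
          rw [rootMultiplicity_mul hrhs0, rootMultiplicity_mul h30,
            rootMultiplicity_X_sub_C_pow, rootMultiplicity_eq_zero hne,
            pow_two, rootMultiplicity_mul (mul_ne_zero hq0 hq0)]
          omega
        rw [hr3] at hL
        omega
      have := aux_wronskian_mult c P Q hP0 hQ0 hK0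
      rw [hmultQ] at this
      omega
    refine (hSBiff k).mpr ?_
    have hH'c : H.derivative.eval c = 0 := by
      have hd : H.derivative = H₁ + (X - C c) * H₁.derivative := by
        rw [← hH1, derivative_mul, derivative_X_sub_C, one_mul]
      rw [hd]
      simp [hH1c]
    have hHd : H.derivative
        = C (2 : ℂ) * B * B.derivative - C (b k) * (C (2 : ℂ) * Ak k * (Ak k).derivative) := by
      rw [hHdef]
      simp only [derivative_sub, derivative_mul, derivative_C, derivative_pow,
        zero_mul, zero_add]
      push_cast
      ring
    have heval : 2 * B.eval c * B.derivative.eval c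
        - b k * (2 * (Ak k).eval c * (Ak k).derivative.eval c) = 0 := by
      have h := hH'c
      rw [hHd] at h
      simp only [eval_sub, eval_mul, eval_C] at h
      linear_combination h
    refine mul_left_cancel₀ (mul_ne_zero two_ne_zero (hBc k)) ?_
    linear_combination (Ak k).eval c * heval + 2 * (Ak k).derivative.eval c * hb k
end

section
/- Fix k with 1 ≤ k ≤ n, and assume Θ(x_k−x_j) ≠ 0 for every j ≠ k and Θ(x_k−y_i) ≠ 0 for every i, so that φ is analytic near x_k with a simple zero at x_k. Then the following are equivalent: (a) φ″(x_k) = 0 (equivalently the residue of 1/φ² at its double pole x_k vanishes, equivalently φ″/φ extends analytically across x_k); (b) the elliptic Stieltjes–Bethe equation ∑_{i=1}^m r_i·f(x_k−y_i) − ∑_{j=1, j≠k}^n f(x_k−x_j) = 2πiβ₁ holds, where f = Θ′/Θ; (c) the derivative at t = x_k of the function t ↦ exp(2πiβ₁t)·∏_{l≠k}Θ(t−x_l)/∏_{i=1}^m Θ(t−y_i)^{r_i} vanishes. -/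
open Filter Topology Finset

private lemma analyticAt_deriv_aux {f : ℂ → ℂ} {x : ℂ} (h : AnalyticAt ℂ f x) :
    AnalyticAt ℂ (deriv f) x :=
  (AnalyticOnNhd.deriv (fun z hz => hz : AnalyticOnNhd ℂ f {z | AnalyticAt ℂ f z})) x h

/-- Elliptic Stieltjes–Bethe equations: for `φ(z) = e^{2πiβ₁z}∏ⱼΘ(z-xⱼ)/∏ᵢΘ(z-yᵢ)^{rᵢ}`
with `Θ` entire, odd, `Θ'(0) ≠ 0`, the following are equivalent at the simple zero `x_k`:
(a) `φ''(x_k) = 0`; (b) `∑ᵢ rᵢ f(x_k-yᵢ) - ∑_{j≠k} f(x_k-xⱼ) = 2πiβ₁` with `f = Θ'/Θ`;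
(c) the derivative at `x_k` of `t ↦ e^{2πiβ₁t}∏_{l≠k}Θ(t-x_l)/∏ᵢΘ(t-yᵢ)^{rᵢ}` vanishes. -/
theorem stmt_15 (n m : ℕ) (hn : 0 < n) (hm : 0 < m)
    (Θ : ℂ → ℂ) (hΘ : ∀ z : ℂ, AnalyticAt ℂ Θ z)
    (hodd : ∀ z : ℂ, Θ (-z) = -Θ z) (hΘ' : deriv Θ 0 ≠ 0)
    (x : Fin n → ℂ) (y : Fin m → ℂ) (r : Fin m → ℕ) (hr : ∀ i, 0 < r i)
    (β₁ : ℤ)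
    (φ : ℂ → ℂ)
    (hφ : φ = fun z => Complex.exp (2 * (Real.pi : ℂ) * Complex.I * (β₁ : ℂ) * z)
      * (∏ j, Θ (z - x j)) / ∏ i, Θ (z - y i) ^ r i)
    (k : Fin n)
    (hxx : ∀ j ∈ Finset.univ.erase k, Θ (x k - x j) ≠ 0)
    (hxy : ∀ i, Θ (x k - y i) ≠ 0) :
    ((iteratedDeriv 2 φ (x k) = 0) ↔
      (∑ i, (r i : ℂ) * (deriv Θ (x k - y i) / Θ (x k - y i))
        - ∑ j ∈ Finset.univ.erase k, deriv Θ (x k - x j) / Θ (x k - x j)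
        = 2 * (Real.pi : ℂ) * Complex.I * (β₁ : ℂ))) ∧
    ((∑ i, (r i : ℂ) * (deriv Θ (x k - y i) / Θ (x k - y i))
        - ∑ j ∈ Finset.univ.erase k, deriv Θ (x k - x j) / Θ (x k - x j)
        = 2 * (Real.pi : ℂ) * Complex.I * (β₁ : ℂ)) ↔
      (deriv (fun t => Complex.exp (2 * (Real.pi : ℂ) * Complex.I * (β₁ : ℂ) * t)
          * (∏ l ∈ Finset.univ.erase k, Θ (t - x l)) / ∏ i, Θ (t - y i) ^ r i)
        (x k) = 0)) := by
  subst hφ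
  set a := x k with ha
  set c : ℂ := 2 * (Real.pi : ℂ) * Complex.I * (β₁ : ℂ) with hc
  -- basic facts about Θ
  have hΘd : ∀ z, DifferentiableAt ℂ Θ z := fun z => (hΘ z).differentiableAt
  have hΘ'a : ∀ z, AnalyticAt ℂ (deriv Θ) z := fun z => analyticAt_deriv_aux (hΘ z)
  have hΘ0 : Θ 0 = 0 := by have h0 := hodd 0; rw [neg_zero] at h0; linear_combination h0 / 2
  have heven : ∀ z, deriv Θ (-z) = deriv Θ z := by
    intro z
    have h1 : HasDerivAt (fun w => Θ (-w)) (deriv Θ (-z) * -1) z :=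
      (hΘd (-z)).hasDerivAt.comp z (hasDerivAt_neg z)
    have h2 : HasDerivAt (fun w => Θ (-w)) (-(deriv Θ z)) z := by
      simp_rw [hodd]; exact ((hΘd z).hasDerivAt).neg
    have := h1.unique h2
    linear_combination -this
  have hΘ''0 : deriv (deriv Θ) 0 = 0 := by
    have h1 : HasDerivAt (fun w => deriv Θ (-w)) (deriv (deriv Θ) 0 * -1) 0 := by
      have := ((hΘ'a (-0)).differentiableAt.hasDerivAt).comp 0 (hasDerivAt_neg 0)
      simpa [Function.comp_def] using this
    have h2 : HasDerivAt (fun w => deriv Θ (-w)) (deriv (deriv Θ) 0) 0 := by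
      simp_rw [heven]; exact ((hΘ'a 0).differentiableAt).hasDerivAt
    have := h1.unique h2
    linear_combination -this / 2
  -- notation
  set ψ : ℂ → ℂ := fun t => Complex.exp (c * t)
      * (∏ l ∈ Finset.univ.erase k, Θ (t - x l)) / ∏ i, Θ (t - y i) ^ r i with hψdef
  set Pa := ∏ l ∈ Finset.univ.erase k, Θ (a - x l) with hPa
  set Qa := ∏ i, Θ (a - y i) ^ r i with hQa
  set Sp := ∑ j ∈ Finset.univ.erase k, deriv Θ (a - x j) / Θ (a - x j) with hSp
  set Sq := ∑ i, (r i : ℂ) * (deriv Θ (a - y i) / Θ (a - y i)) with hSq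
  have hPa0 : Pa ≠ 0 := Finset.prod_ne_zero_iff.mpr hxx
  have hQa0 : Qa ≠ 0 := Finset.prod_ne_zero_iff.mpr (fun i _ => pow_ne_zero _ (hxy i))
  have hψa0 : ψ a ≠ 0 := by
    rw [hψdef]
    exact div_ne_zero (mul_ne_zero (Complex.exp_ne_zero _) hPa0) hQa0
  -- derivative building blocks
  have hbase : ∀ (z b : ℂ), HasDerivAt (fun t => Θ (t - b)) (deriv Θ (z - b)) z := by
    intro z b
    have h1 : HasDerivAt (fun t : ℂ => t - b) 1 z := (hasDerivAt_id z).sub_const _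
    simpa [Function.comp_def] using ((hΘd (z - b)).hasDerivAt).comp z h1
  have hbase' : ∀ (z b : ℂ), HasDerivAt (fun t => deriv Θ (t - b)) (deriv (deriv Θ) (z - b)) z := by
    intro z b
    have h1 : HasDerivAt (fun t : ℂ => t - b) 1 z := (hasDerivAt_id z).sub_const _
    simpa [Function.comp_def] using ((hΘ'a (z - b)).differentiableAt.hasDerivAt).comp z h1
  have hEd : HasDerivAt (fun t => Complex.exp (c * t)) (Complex.exp (c * a) * c) a := by
    have h1 : HasDerivAt (fun t : ℂ => c * t) c a := by
      simpa using (hasDerivAt_id a).const_mul c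
    exact h1.cexp
  -- derivative of the P-product
  have hP : HasDerivAt (fun t => ∏ l ∈ Finset.univ.erase k, Θ (t - x l)) (Pa * Sp) a := by
    have h := HasDerivAt.fun_finsetProd (u := Finset.univ.erase k)
      (f := fun l t => Θ (t - x l)) (f' := fun l => deriv Θ (a - x l))
      (fun l _ => hbase a (x l))
    convert h using 1
    · rfl
    · rfl
    rw [hSp, Finset.mul_sum]
    refine Finset.sum_congr rfl (fun l hl => ?_)
    have hfac : Θ (a - x l) * ∏ j ∈ (Finset.univ.erase k).erase l, Θ (a - x j) = Pa := by
      rw [hPa]; exact Finset.mul_prod_erase (Finset.univ.erase k) (fun j => Θ (a - x j)) hl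
    have hx0 := hxx l hl
    rw [smul_eq_mul, ← hfac]
    field_simp
  -- derivative of the Q-product
  have hQ : HasDerivAt (fun t => ∏ i, Θ (t - y i) ^ r i) (Qa * Sq) a := by
    have h := HasDerivAt.fun_finsetProd (u := Finset.univ)
      (f := fun i t => Θ (t - y i) ^ r i)
      (f' := fun i => (r i : ℂ) * Θ (a - y i) ^ (r i - 1) * deriv Θ (a - y i))
      (fun i _ => (hbase a (y i)).pow (r i))
    convert h using 1
    · rfl
    · rfl
    rw [hSq, Finset.mul_sum]
    refine Finset.sum_congr rfl (fun i _ => ?_)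
    have hfac : Θ (a - y i) ^ r i * ∏ j ∈ Finset.univ.erase i, Θ (a - y j) ^ r j = Qa := by
      rw [hQa]; exact Finset.mul_prod_erase Finset.univ (fun j => Θ (a - y j) ^ r j) (Finset.mem_univ i)
    have hy0 := hxy i
    obtain ⟨s, hs⟩ : ∃ s, r i = s + 1 := ⟨r i - 1, (Nat.succ_pred_eq_of_pos (hr i)).symm⟩
    rw [smul_eq_mul, ← hfac]
    field_simp
    simp only [hs, Nat.add_sub_cancel]
    push_cast
    ring
  -- derivative of ψ
  have hψd : HasDerivAt ψ (ψ a * (c + Sp - Sq)) a := by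
    have hdiv := (hEd.fun_mul hP).fun_div hQ hQa0
    have heq : (ψ : ℂ → ℂ) = fun t => Complex.exp (c * t)
        * (∏ l ∈ Finset.univ.erase k, Θ (t - x l)) / ∏ i, Θ (t - y i) ^ r i := hψdef
    rw [heq]
    convert hdiv using 1
    · rfl
    · rfl
    simp only [← hPa, ← hQa]
    field_simp
  have hderivψ : deriv ψ a = ψ a * (c + Sp - Sq) := hψd.deriv
  -- equivalence (b) ↔ (c)
  have hbc : (Sq - Sp = c) ↔ deriv ψ a = 0 := by
    rw [hderivψ, mul_eq_zero]
    constructor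
    · intro h; right; linear_combination -h
    · rintro (h | h)
      · exact absurd h hψa0
      · linear_combination -h
  -- analyticity of ψ at a
  have hψA : AnalyticAt ℂ ψ a := by
    have hsub : ∀ b : ℂ, AnalyticAt ℂ (fun t : ℂ => Θ (t - b)) a := by
      intro b
      have hsub' : AnalyticAt ℂ (fun t : ℂ => t - b) a := analyticAt_id.sub analyticAt_const
      exact AnalyticAt.comp_of_eq (hΘ (a - b)) hsub' rfl
    have hEA : AnalyticAt ℂ (fun t : ℂ => Complex.exp (c * t)) a :=
      (analyticAt_const.mul analyticAt_id).cexp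
    have hPA : AnalyticAt ℂ (fun t : ℂ => ∏ l ∈ Finset.univ.erase k, Θ (t - x l)) a :=
      Finset.analyticAt_fun_prod _ (fun l _ => hsub (x l))
    have hQA : AnalyticAt ℂ (fun t : ℂ => ∏ i, Θ (t - y i) ^ r i) a :=
      Finset.analyticAt_fun_prod _ (fun i _ => (hsub (y i)).pow _)
    rw [hψdef]
    exact (hEA.mul hPA).div hQA hQa0
  have hψ'A : AnalyticAt ℂ (deriv ψ) a := analyticAt_deriv_aux hψA
  -- factorization of φ
  have hfactor : (fun z => Complex.exp (c * z) * (∏ j, Θ (z - x j)) / ∏ i, Θ (z - y i) ^ r i)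
      = fun z => Θ (z - a) * ψ z := by
    funext z
    rw [hψdef]
    have hsplit : (∏ j, Θ (z - x j)) = Θ (z - x k) * ∏ l ∈ Finset.univ.erase k, Θ (z - x l) :=
      (Finset.mul_prod_erase Finset.univ (fun j => Θ (z - x j)) (Finset.mem_univ k)).symm
    rw [hsplit, ← ha]
    ring
  -- second derivative computation
  have hkey : iteratedDeriv 2 (fun z => Complex.exp (c * z) * (∏ j, Θ (z - x j))
      / ∏ i, Θ (z - y i) ^ r i) a = 2 * deriv Θ 0 * deriv ψ a := by
    rw [hfactor]
    rw [show (2 : ℕ) = 1 + 1 from rfl, iteratedDeriv_succ, iteratedDeriv_one]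
    have hev : ∀ᶠ z in 𝓝 a, DifferentiableAt ℂ ψ z :=
      hψA.eventually_analyticAt.mono (fun z h => h.differentiableAt)
    have hder : deriv (fun z => Θ (z - a) * ψ z)
        =ᶠ[𝓝 a] fun z => deriv Θ (z - a) * ψ z + Θ (z - a) * deriv ψ z := by
      filter_upwards [hev] with z hz
      exact ((hbase z a).mul hz.hasDerivAt).deriv
    rw [hder.deriv_eq]
    have hT1 : HasDerivAt (fun z => deriv Θ (z - a) * ψ z)
        (deriv (deriv Θ) (a - a) * ψ a + deriv Θ (a - a) * deriv ψ a) a :=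
      (hbase' a a).mul hψA.differentiableAt.hasDerivAt
    have hT2 : HasDerivAt (fun z => Θ (z - a) * deriv ψ z)
        (deriv Θ (a - a) * deriv ψ a + Θ (a - a) * deriv (deriv ψ) a) a :=
      (hbase a a).mul hψ'A.differentiableAt.hasDerivAt
    have h3 := (hT1.fun_add hT2).deriv
    rw [h3, sub_self, hΘ0, hΘ''0]
    ring
  constructor
  · rw [hkey, hbc]
    have h2 : (2 : ℂ) * deriv Θ 0 ≠ 0 := mul_ne_zero two_ne_zero hΘ'
    constructor
    · intro h
      rcases mul_eq_zero.mp h with h | h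
      · exact absurd h h2
      · exact h
    · intro h; rw [h, mul_zero]
  · exact hbc
end

section
/- Fix k with 1 ≤ k ≤ m, and assume Θ(y_k−x_j) ≠ 0 for every j and Θ(y_k−y_i) ≠ 0 for every i ≠ k, so that φ has a pole of exact order r_k at y_k. Define the accessory parameter H_k = 2r_k [ ∑_{i=1, i≠k}^m r_i·f(y_k−y_i) − ∑_{j=1}^n f(y_k−x_j) − 2πiβ₁ ], where f = Θ′/Θ. Then the function z ↦ φ″(z)/φ(z) − r_k(r_k+1)/(z−y_k)² − H_k/(z−y_k), defined on a punctured neighbourhood of y_k, extends to a function analytic on a full neighbourhood of y_k. That is, the potential u = φ″/φ has a double pole at y_k with quadratic residue r_k(r_k+1) and first-order coefficient H_k. -/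
open Filter Topology Finset

private lemma analyticAt_dslope' {f : ℂ → ℂ} {a : ℂ} (hf : AnalyticAt ℂ f a) :
    AnalyticAt ℂ (dslope f a) a := by
  obtain ⟨p, hp⟩ := hf
  exact ⟨p.fslope, hp.has_fpower_series_dslope_fslope⟩

private lemma analyticAt_deriv' {f : ℂ → ℂ} {z : ℂ} (hf : AnalyticAt ℂ f z) :
    AnalyticAt ℂ (deriv f) z := by
  obtain ⟨s, hs, hfs⟩ := hf.exists_mem_nhds_analyticOnNhd
  exact hfs.deriv z (mem_of_mem_nhds hs)

private lemma hasDerivAt_zpow_sub {a z : ℂ} (q : ℤ) (hz : z ≠ a) :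
    HasDerivAt (fun w => (w - a) ^ q) ((q : ℂ) * (z - a) ^ (q - 1)) z := by
  have h1 : HasDerivAt (fun w : ℂ => w - a) 1 z := (hasDerivAt_id z).sub_const a
  have h2 := hasDerivAt_zpow q (z - a) (Or.inl (sub_ne_zero.mpr hz))
  simpa [Function.comp_def] using h2.comp z h1

private lemma alg (D2 D1 Ψ La t P ρc : ℂ) (hΨ : Ψ ≠ 0) (ht : t ≠ 0) (hP : P ≠ 0) :
    D2 / Ψ - 2 * ρc * ((D1 / Ψ - La) / t) =
      (D2 * P⁻¹ + D1 * (-ρc * (P * t)⁻¹) +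
          (D1 * (-ρc * (P * t)⁻¹) + Ψ * (-ρc * ((-ρc - 1) * (P * t ^ 2)⁻¹)))) / (Ψ * P⁻¹)
        - ρc * (ρc + 1) / t ^ 2 + 2 * ρc * La / t := by
  have c1 : P⁻¹ * P = 1 := inv_mul_cancel₀ hP
  set X : ℂ := D2 * P⁻¹ + D1 * (-ρc * (P * t)⁻¹) +
      (D1 * (-ρc * (P * t)⁻¹) + Ψ * (-ρc * ((-ρc - 1) * (P * t ^ 2)⁻¹))) with hX
  have e2 : X / (Ψ * P⁻¹) = X * P / Ψ := by
    rw [← mul_div_mul_right X (Ψ * P⁻¹) hP, mul_assoc, c1, mul_one]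
  have e1 : X * P = D2 - 2 * ρc * D1 * t⁻¹ + ρc * (ρc + 1) * Ψ * (t ^ 2)⁻¹ := by
    rw [hX, mul_inv P t, mul_inv P (t ^ 2)]
    linear_combination (D2 - 2 * ρc * D1 * t⁻¹ + ρc * (ρc + 1) * Ψ * (t ^ 2)⁻¹) * c1
  rw [e2, e1]
  linear_combination (-(ρc * (ρc + 1) * (t ^ 2)⁻¹)) * mul_inv_cancel₀ hΨ

set_option maxHeartbeats 1000000 in
private theorem aux2 (num den φ : ℂ → ℂ) (a : ℂ) (ρ : ℕ)
    (hnum : AnalyticAt ℂ num a) (hden : AnalyticAt ℂ den a)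
    (hnumne : num a ≠ 0) (hdenne : den a ≠ 0)
    (hkey : ∀ z, φ z = (num z / den z) * (z - a) ^ (-(ρ : ℤ))) :
    ∃ g : ℂ → ℂ, AnalyticAt ℂ g a ∧ ∀ᶠ z in 𝓝[≠] a,
      g z = iteratedDeriv 2 φ z / φ z - (ρ : ℂ) * ((ρ : ℂ) + 1) / (z - a) ^ 2
            + 2 * (ρ : ℂ) * (logDeriv (fun w => num w / den w) a) / (z - a) := by
  set ψ : ℂ → ℂ := fun w => num w / den w with hψdef
  have hψ : AnalyticAt ℂ ψ a := hnum.div hden hdenne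
  have hψne : ψ a ≠ 0 := div_ne_zero hnumne hdenne
  have hφf : φ = fun w => ψ w * (w - a) ^ (-(ρ : ℤ)) := funext hkey
  have hLanal : AnalyticAt ℂ (logDeriv ψ) a := (analyticAt_deriv' hψ).div hψ hψne
  have hev : ∀ᶠ z in 𝓝 a, AnalyticAt ℂ ψ z ∧ ψ z ≠ 0 :=
    hψ.eventually_analyticAt.and (hψ.continuousAt.eventually_ne hψne)
  obtain ⟨U, hU_sub, hUopen, haU⟩ := mem_nhds_iff.mp hev
  have hUa : ∀ z ∈ U, AnalyticAt ℂ ψ z := fun z hz => (hU_sub hz).1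
  have hUne : ∀ z ∈ U, ψ z ≠ 0 := fun z hz => (hU_sub hz).2
  have hdφ1 : ∀ z ∈ U, z ≠ a → deriv φ z =
      deriv ψ z * (z - a) ^ (-(ρ : ℤ))
      + ψ z * (((-(ρ : ℤ) : ℤ) : ℂ) * (z - a) ^ (-(ρ : ℤ) - 1)) := by
    intro z hz hza
    have h := ((hUa z hz).differentiableAt.hasDerivAt.mul (hasDerivAt_zpow_sub (-(ρ : ℤ)) hza))
    rw [hφf]
    exact h.deriv
  have hdφ2 : ∀ z ∈ U, z ≠ a → deriv (deriv φ) z =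
      (deriv (deriv ψ) z * (z - a) ^ (-(ρ : ℤ))
        + deriv ψ z * (((-(ρ : ℤ) : ℤ) : ℂ) * (z - a) ^ (-(ρ : ℤ) - 1)))
      + (deriv ψ z * (((-(ρ : ℤ) : ℤ) : ℂ) * (z - a) ^ (-(ρ : ℤ) - 1))
        + ψ z * (((-(ρ : ℤ) : ℤ) : ℂ) *
            (((-(ρ : ℤ) - 1 : ℤ) : ℂ) * (z - a) ^ (-(ρ : ℤ) - 1 - 1)))) := by
    intro z hz hza
    have hops : IsOpen (U \ {a}) := hUopen.sdiff isClosed_singleton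
    have hmem : U \ {a} ∈ 𝓝 z := hops.mem_nhds ⟨hz, hza⟩
    have heq : deriv φ =ᶠ[𝓝 z] (fun w => deriv ψ w * (w - a) ^ (-(ρ : ℤ))
        + ψ w * (((-(ρ : ℤ) : ℤ) : ℂ) * (w - a) ^ (-(ρ : ℤ) - 1))) :=
      eventually_of_mem hmem (fun w hw => hdφ1 w hw.1 hw.2)
    rw [heq.deriv_eq]
    have hψz := hUa z hz
    have t1 : HasDerivAt (fun w => deriv ψ w * (w - a) ^ (-(ρ : ℤ)))
        (deriv (deriv ψ) z * (z - a) ^ (-(ρ : ℤ))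
          + deriv ψ z * (((-(ρ : ℤ) : ℤ) : ℂ) * (z - a) ^ (-(ρ : ℤ) - 1))) z :=
      (analyticAt_deriv' hψz).differentiableAt.hasDerivAt.mul (hasDerivAt_zpow_sub _ hza)
    have t2 : HasDerivAt (fun w => ψ w * (((-(ρ : ℤ) : ℤ) : ℂ) * (w - a) ^ (-(ρ : ℤ) - 1)))
        (deriv ψ z * (((-(ρ : ℤ) : ℤ) : ℂ) * (z - a) ^ (-(ρ : ℤ) - 1))
          + ψ z * (((-(ρ : ℤ) : ℤ) : ℂ) *
              (((-(ρ : ℤ) - 1 : ℤ) : ℂ) * (z - a) ^ (-(ρ : ℤ) - 1 - 1)))) z :=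
      hψz.differentiableAt.hasDerivAt.mul ((hasDerivAt_zpow_sub _ hza).const_mul _)
    exact (t1.add t2).deriv
  refine ⟨fun z => deriv (deriv ψ) z / ψ z - 2 * (ρ : ℂ) * dslope (logDeriv ψ) a z, ?_, ?_⟩
  · exact ((analyticAt_deriv' (analyticAt_deriv' hψ)).div hψ hψne).sub
      ((analyticAt_const.mul analyticAt_const).mul (analyticAt_dslope' hLanal))
  · have hUnhds : U ∈ 𝓝 a := hUopen.mem_nhds haU
    filter_upwards [self_mem_nhdsWithin, mem_nhdsWithin_of_mem_nhds hUnhds] with z hza hz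
    have hza' : z ≠ a := hza
    have hψzne := hUne z hz
    have hii : iteratedDeriv 2 φ z = deriv (deriv φ) z := by
      rw [show (2 : ℕ) = 1 + 1 by norm_num, iteratedDeriv_succ, iteratedDeriv_one]
    have h2 := hdφ2 z hz hza'
    have hφz' : φ z = ψ z * (z - a) ^ (-(ρ : ℤ)) := hkey z
    have hds : dslope (logDeriv ψ) a z = (logDeriv ψ z - logDeriv ψ a) / (z - a) := by
      rw [dslope_of_ne _ hza', slope_def_field]
    have ht : z - a ≠ 0 := sub_ne_zero.mpr hza'
    have hPne : (z - a) ^ ρ ≠ 0 := pow_ne_zero _ ht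
    have e1 : (z - a) ^ (-(ρ : ℤ)) = ((z - a) ^ ρ)⁻¹ := by rw [zpow_neg, zpow_natCast]
    have e2 : (z - a) ^ (-(ρ : ℤ) - 1) = ((z - a) ^ ρ * (z - a))⁻¹ := by
      rw [show -(ρ : ℤ) - 1 = -((ρ + 1 : ℕ) : ℤ) by push_cast; ring, zpow_neg, zpow_natCast,
        pow_succ]
    have e3 : (z - a) ^ (-(ρ : ℤ) - 1 - 1) = ((z - a) ^ ρ * (z - a) ^ 2)⁻¹ := by
      rw [show -(ρ : ℤ) - 1 - 1 = -((ρ + 2 : ℕ) : ℤ) by push_cast; ring, zpow_neg, zpow_natCast,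
        pow_add]
    show deriv (deriv ψ) z / ψ z - 2 * (ρ : ℂ) * dslope (logDeriv ψ) a z = _
    rw [hii, h2, hφz', hds, e1, e2, e3]
    generalize logDeriv ψ a = La
    simp only [logDeriv_apply]
    push_cast
    generalize hD2 : deriv (deriv ψ) z = D2
    generalize hD1 : deriv ψ z = D1
    generalize hΨg : ψ z = Ψ
    generalize hPg : (z - a) ^ ρ = P
    generalize htg : z - a = t
    rw [hΨg] at hψzne
    rw [hPg] at hPne
    rw [htg] at ht
    exact alg D2 D1 Ψ La t P (ρ : ℂ) hψzne ht hPne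

/-- For `φ(z) = e^{2πiβ₁z}∏ⱼΘ(z-xⱼ)/∏ᵢΘ(z-yᵢ)^{rᵢ}` with `Θ` entire, odd, `Θ'(0) ≠ 0`,
the potential `u = φ''/φ` has a double pole at `y_k` with quadratic residue `r_k(r_k+1)`
and first-order coefficient `H_k = 2r_k[∑_{i≠k} rᵢ f(y_k-yᵢ) - ∑ⱼ f(y_k-xⱼ) - 2πiβ₁]`,
`f = Θ'/Θ`: subtracting this singular part yields an analytic extension across `y_k`. -/
theorem stmt_16 (n m : ℕ) (hn : 0 < n) (hm : 0 < m)
    (Θ : ℂ → ℂ) (hΘ : ∀ z : ℂ, AnalyticAt ℂ Θ z)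
    (hodd : ∀ z : ℂ, Θ (-z) = -Θ z) (hΘ' : deriv Θ 0 ≠ 0)
    (x : Fin n → ℂ) (y : Fin m → ℂ) (r : Fin m → ℕ) (hr : ∀ i, 0 < r i)
    (β₁ : ℤ)
    (φ : ℂ → ℂ)
    (hφ : φ = fun z => Complex.exp (2 * (Real.pi : ℂ) * Complex.I * (β₁ : ℂ) * z)
      * (∏ j, Θ (z - x j)) / ∏ i, Θ (z - y i) ^ r i)
    (k : Fin m)
    (hyx : ∀ j, Θ (y k - x j) ≠ 0)
    (hyy : ∀ i ∈ Finset.univ.erase k, Θ (y k - y i) ≠ 0) :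
    ∃ g : ℂ → ℂ, AnalyticAt ℂ g (y k) ∧
      ∀ᶠ z in 𝓝[≠] (y k),
        g z = iteratedDeriv 2 φ z / φ z
          - (r k : ℂ) * ((r k : ℂ) + 1) / (z - y k) ^ 2
          - (2 * (r k : ℂ) *
              ((∑ i ∈ Finset.univ.erase k,
                  (r i : ℂ) * (deriv Θ (y k - y i) / Θ (y k - y i)))
                - (∑ j, deriv Θ (y k - x j) / Θ (y k - x j))
                - 2 * (Real.pi : ℂ) * Complex.I * (β₁ : ℂ))) / (z - y k) := by
  -- basic facts about Θ and G := dslope Θ 0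
  have hΘ0 : Θ 0 = 0 := by
    have h := hodd 0
    rw [neg_zero] at h
    linear_combination h / 2
  set G : ℂ → ℂ := dslope Θ 0 with hGdef
  have hG0 : G 0 = deriv Θ 0 := dslope_same Θ 0
  have hG0ne : G 0 ≠ 0 := by rw [hG0]; exact hΘ'
  have hmul : ∀ w : ℂ, Θ w = w * G w := by
    intro w
    have h := sub_smul_dslope Θ 0 w
    rw [sub_zero, hΘ0, sub_zero, smul_eq_mul] at h
    exact h.symm
  have hGanal : AnalyticAt ℂ G 0 := analyticAt_dslope' (hΘ 0)
  have hGeven : ∀ w : ℂ, G (-w) = G w := by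
    intro w
    rcases eq_or_ne w 0 with rfl | hw
    · rw [neg_zero]
    · rw [hGdef, dslope_of_ne Θ (neg_ne_zero.mpr hw), dslope_of_ne Θ hw,
        slope_def_field, slope_def_field, hΘ0, hodd, sub_zero, sub_zero, sub_zero, sub_zero,
        neg_div_neg_eq]
  have hG'0 : deriv G 0 = 0 := by
    have h1 : deriv (fun w => G (-w)) 0 = -deriv G (-0) := deriv_comp_neg G 0
    have h2 : (fun w => G (-w)) = G := funext hGeven
    rw [h2, neg_zero] at h1
    linear_combination h1 / 2
  -- analyticity of translated Θ
  have hsub : ∀ (b w : ℂ), AnalyticAt ℂ (fun z : ℂ => Θ (z - b)) w := by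
    intro b w
    have h1 : AnalyticAt ℂ (fun z : ℂ => z - b) w := analyticAt_id.sub analyticAt_const
    exact AnalyticAt.comp (f := fun z : ℂ => z - b) (hΘ (w - b)) h1
  have hGsub : AnalyticAt ℂ (fun z : ℂ => G (z - y k)) (y k) := by
    have h1 : AnalyticAt ℂ (fun z : ℂ => z - y k) (y k) := analyticAt_id.sub analyticAt_const
    have h0 : AnalyticAt ℂ G (y k - y k) := by rw [sub_self]; exact hGanal
    exact AnalyticAt.comp (f := fun z : ℂ => z - y k) h0 h1
  -- numerator and denominator
  have hEanal : AnalyticAt ℂ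
      (fun z : ℂ => Complex.exp (2 * (Real.pi : ℂ) * Complex.I * (β₁ : ℂ) * z)) (y k) :=
    (analyticAt_const.mul analyticAt_id).cexp
  have hPanal : AnalyticAt ℂ (fun z : ℂ => ∏ j, Θ (z - x j)) (y k) :=
    Finset.analyticAt_fun_prod univ (fun j _ => hsub (x j) (y k))
  have hQanal : AnalyticAt ℂ (fun z : ℂ => ∏ i ∈ univ.erase k, Θ (z - y i) ^ r i) (y k) :=
    Finset.analyticAt_fun_prod (univ.erase k) (fun i _ => (hsub (y i) (y k)).pow (r i))
  have hGkanal : AnalyticAt ℂ (fun z : ℂ => G (z - y k) ^ r k) (y k) := hGsub.pow (r k)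
  have hnum_anal : AnalyticAt ℂ
      (fun z : ℂ => Complex.exp (2 * (Real.pi : ℂ) * Complex.I * (β₁ : ℂ) * z)
        * ∏ j, Θ (z - x j)) (y k) := hEanal.mul hPanal
  have hden_anal : AnalyticAt ℂ
      (fun z : ℂ => (∏ i ∈ univ.erase k, Θ (z - y i) ^ r i) * G (z - y k) ^ r k) (y k) :=
    hQanal.mul hGkanal
  have hPne : (∏ j, Θ (y k - x j)) ≠ 0 := Finset.prod_ne_zero_iff.mpr fun j _ => hyx j
  have hQne : (∏ i ∈ univ.erase k, Θ (y k - y i) ^ r i) ≠ 0 :=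
    Finset.prod_ne_zero_iff.mpr fun i hi => pow_ne_zero _ (hyy i hi)
  have hGkne : G (y k - y k) ^ r k ≠ 0 := pow_ne_zero _ (by rw [sub_self]; exact hG0ne)
  have hnum_ne : Complex.exp (2 * (Real.pi : ℂ) * Complex.I * (β₁ : ℂ) * y k)
      * ∏ j, Θ (y k - x j) ≠ 0 := mul_ne_zero (Complex.exp_ne_zero _) hPne
  have hden_ne : (∏ i ∈ univ.erase k, Θ (y k - y i) ^ r i) * G (y k - y k) ^ r k ≠ 0 :=
    mul_ne_zero hQne hGkne
  -- key factorization
  have hkey : ∀ z, φ z =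
      ((Complex.exp (2 * (Real.pi : ℂ) * Complex.I * (β₁ : ℂ) * z) * ∏ j, Θ (z - x j)) /
        ((∏ i ∈ univ.erase k, Θ (z - y i) ^ r i) * G (z - y k) ^ r k))
      * (z - y k) ^ (-(r k : ℤ)) := by
    intro z
    rw [hφ]
    show (Complex.exp (2 * (Real.pi : ℂ) * Complex.I * (β₁ : ℂ) * z) * ∏ j, Θ (z - x j)) /
        (∏ i, Θ (z - y i) ^ r i) = _
    have hD : (∏ i, Θ (z - y i) ^ r i) =
        ((∏ i ∈ univ.erase k, Θ (z - y i) ^ r i) * G (z - y k) ^ r k) * (z - y k) ^ r k := by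
      rw [← Finset.mul_prod_erase univ _ (mem_univ k), hmul (z - y k), mul_pow]
      ring
    rw [hD, ← div_div, zpow_neg, zpow_natCast, ← div_eq_mul_inv]
  -- the logarithmic derivative at y k
  have hterm1 : ∀ b : ℂ, logDeriv (fun w => Θ (w - b)) (y k) = deriv Θ (y k - b) / Θ (y k - b) := by
    intro b
    rw [logDeriv_apply, deriv_comp_sub_const]
  have hexp : logDeriv
      (fun w : ℂ => Complex.exp (2 * (Real.pi : ℂ) * Complex.I * (β₁ : ℂ) * w)) (y k)
      = 2 * (Real.pi : ℂ) * Complex.I * (β₁ : ℂ) := by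
    have hd : HasDerivAt
        (fun w : ℂ => Complex.exp (2 * (Real.pi : ℂ) * Complex.I * (β₁ : ℂ) * w))
        (Complex.exp (2 * (Real.pi : ℂ) * Complex.I * (β₁ : ℂ) * y k)
          * (2 * (Real.pi : ℂ) * Complex.I * (β₁ : ℂ))) (y k) := by
      simpa [Function.comp_def] using (Complex.hasDerivAt_exp _).comp (y k)
        (HasDerivAt.const_mul (2 * (Real.pi : ℂ) * Complex.I * (β₁ : ℂ)) (hasDerivAt_id (y k)))
    rw [logDeriv_apply, hd.deriv, mul_comm, mul_div_assoc, div_self (Complex.exp_ne_zero _),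
      mul_one]
  have hGk0 : logDeriv (fun w : ℂ => G (w - y k) ^ r k) (y k) = 0 := by
    rw [logDeriv_fun_pow hGsub.differentiableAt, logDeriv_apply, deriv_comp_sub_const, sub_self,
      hG'0, zero_div, mul_zero]
  have hsumx : logDeriv (fun w : ℂ => ∏ j, Θ (w - x j)) (y k)
      = ∑ j, deriv Θ (y k - x j) / Θ (y k - x j) := by
    have h := logDeriv_prod (s := univ) (f := fun j (w : ℂ) => Θ (w - x j)) (x := y k)
      (fun j _ => hyx j) (fun j _ => (hsub (x j) (y k)).differentiableAt)
    rw [h]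
    exact Finset.sum_congr rfl fun j _ => hterm1 (x j)
  have hsumy : logDeriv (fun w : ℂ => ∏ i ∈ univ.erase k, Θ (w - y i) ^ r i) (y k)
      = ∑ i ∈ univ.erase k, (r i : ℂ) * (deriv Θ (y k - y i) / Θ (y k - y i)) := by
    have h := logDeriv_prod (s := univ.erase k) (f := fun i (w : ℂ) => Θ (w - y i) ^ r i) (x := y k)
      (fun i hi => pow_ne_zero _ (hyy i hi))
      (fun i _ => ((hsub (y i) (y k)).pow (r i)).differentiableAt)
    rw [h]
    refine Finset.sum_congr rfl fun i hi => ?_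
    rw [logDeriv_fun_pow (hsub (y i) (y k)).differentiableAt, hterm1 (y i)]
  have hLa : logDeriv (fun w =>
      (Complex.exp (2 * (Real.pi : ℂ) * Complex.I * (β₁ : ℂ) * w) * ∏ j, Θ (w - x j)) /
        ((∏ i ∈ univ.erase k, Θ (w - y i) ^ r i) * G (w - y k) ^ r k)) (y k)
      = 2 * (Real.pi : ℂ) * Complex.I * (β₁ : ℂ)
        + (∑ j, deriv Θ (y k - x j) / Θ (y k - x j))
        - ∑ i ∈ univ.erase k, (r i : ℂ) * (deriv Θ (y k - y i) / Θ (y k - y i)) := by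
    have hm1 := logDeriv_mul
      (f := fun z : ℂ => Complex.exp (2 * (Real.pi : ℂ) * Complex.I * (β₁ : ℂ) * z))
      (g := fun z : ℂ => ∏ j, Θ (z - x j)) (y k) (Complex.exp_ne_zero _) hPne
      hEanal.differentiableAt hPanal.differentiableAt
    have hm2 := logDeriv_mul
      (f := fun z : ℂ => ∏ i ∈ univ.erase k, Θ (z - y i) ^ r i)
      (g := fun z : ℂ => G (z - y k) ^ r k) (y k) hQne hGkne
      hQanal.differentiableAt hGkanal.differentiableAt
    rw [logDeriv_div (y k) hnum_ne hden_ne hnum_anal.differentiableAt hden_anal.differentiableAt,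
      hm1, hm2, hexp, hGk0, hsumx, hsumy, add_zero]
  obtain ⟨g, hg, hgev⟩ := aux2 _ _ φ (y k) (r k) hnum_anal hden_anal hnum_ne hden_ne hkey
  refine ⟨g, hg, ?_⟩
  filter_upwards [hgev] with z hz
  rw [hz, hLa]
  ring
end
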